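/- arXiv:2008.09944 — 8 statements merged into one kernel-verified Lean document; each statement's English description precedes it below -/
import Mathlib

section
/- Let F be a finite field and let k, n, d be positive integers with d ≤ k. Let M be a set of k × n matrices over F such that rank(A − B) ≥ d for all distinct A, B ∈ M. For A ∈ M let U_A ⊆ F^{k+n} be the row space of the k × (k+n) block matrix (I_k | A), where I_k is the k × k identity matrix. Then each U_A is a k-dimensional subspace of F^{k+n}, the map A ↦ U_A is injective on M, and dim(U_A ∩ U_B) ≤ k − d for all distinct A, B ∈ M; consequently {U_A : A ∈ M} is a set of |M| k-dimensional subspaces of F^{k+n} with pairwise subspace distance at least 2d. -/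
open Matrix

/-- The row space of a matrix: the span of its rows, i.e. the range of `vecMul`. -/
noncomputable def rowSpace {F : Type*} [Field F] {m n : Type*} [Fintype m]
    (A : Matrix m n F) : Submodule F (n → F) :=
  LinearMap.range A.vecMulLinear

/-- The lifted generator matrix `(I_k | A)`. -/
def liftMat {F : Type*} [Field F] {k n : ℕ} (A : Matrix (Fin k) (Fin n) F) :
    Matrix (Fin k) (Fin k ⊕ Fin n) F :=
  Matrix.fromCols (1 : Matrix (Fin k) (Fin k) F) A

lemma vecMul_liftMat {F : Type*} [Field F] {k n : ℕ} (A : Matrix (Fin k) (Fin n) F)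
    (x : Fin k → F) : x ᵥ* liftMat A = Sum.elim x (x ᵥ* A) := by
  rw [liftMat, Matrix.vecMul_fromCols, Matrix.vecMul_one]

lemma mem_rowSpace_liftMat {F : Type*} [Field F] {k n : ℕ} (A : Matrix (Fin k) (Fin n) F)
    (v : Fin k ⊕ Fin n → F) (hv : v ∈ rowSpace (liftMat A)) :
    v = Sum.elim (v ∘ Sum.inl) ((v ∘ Sum.inl) ᵥ* A) := by
  obtain ⟨x, hx⟩ := hv
  rw [Matrix.vecMulLinear_apply, vecMul_liftMat] at hx
  subst hx
  simp

lemma finrank_ker_vecMul {F : Type*} [Field F] {k n : ℕ} (A : Matrix (Fin k) (Fin n) F) :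
    Module.finrank F ↥(LinearMap.ker A.vecMulLinear) = k - A.rank := by
  have h := LinearMap.finrank_range_add_finrank_ker (A.vecMulLinear)
  have hr : Module.finrank F ↥(LinearMap.range A.vecMulLinear) = A.rank := by
    rw [← Matrix.rank_transpose, Matrix.rank, Matrix.mulVecLin_transpose]
  rw [hr, Module.finrank_fintype_fun_eq_card, Fintype.card_fin] at h
  omega

/-- lifting a rank-metric code of minimum rank distance `d` gives a
constant dimension code of dimension `k` and subspace distance at least `2d`. -/
theorem lifted_rank_metric_code_is_CDC
    (F : Type*) [Field F] [Fintype F] (k n d : ℕ)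
    (hk : 0 < k) (hn : 0 < n) (hd : 0 < d) (hdk : d ≤ k)
    (M : Set (Matrix (Fin k) (Fin n) F))
    (hM : ∀ A ∈ M, ∀ B ∈ M, A ≠ B → d ≤ (A - B).rank) :
    (∀ A ∈ M, Module.finrank F ↥(rowSpace (liftMat A)) = k) ∧
    (∀ A ∈ M, ∀ B ∈ M, rowSpace (liftMat A) = rowSpace (liftMat B) → A = B) ∧
    (∀ A ∈ M, ∀ B ∈ M, A ≠ B →
      Module.finrank F ↥(rowSpace (liftMat A) ⊓ rowSpace (liftMat B)) ≤ k - d) ∧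
    (∀ A ∈ M, ∀ B ∈ M, A ≠ B →
      2 * d ≤ 2 * k - 2 * Module.finrank F ↥(rowSpace (liftMat A) ⊓ rowSpace (liftMat B))) := by
  -- dimension of each row space
  have hdim : ∀ A : Matrix (Fin k) (Fin n) F,
      Module.finrank F ↥(rowSpace (liftMat A)) = k := by
    intro A
    have hinj : Function.Injective (liftMat A).vecMulLinear := by
      intro x y hxy
      simp only [Matrix.vecMulLinear_apply, vecMul_liftMat] at hxy
      have := congrArg (fun v => v ∘ Sum.inl) hxy
      simpa using this
    rw [rowSpace, LinearMap.finrank_range_of_inj hinj,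
      Module.finrank_fintype_fun_eq_card, Fintype.card_fin]
  -- intersection bound
  have hinter : ∀ A ∈ M, ∀ B ∈ M, A ≠ B →
      Module.finrank F ↥(rowSpace (liftMat A) ⊓ rowSpace (liftMat B)) ≤ k - d := by
    intro A hA B hB hAB
    set K := LinearMap.ker (A - B).vecMulLinear
    let proj : (Fin k ⊕ Fin n → F) →ₗ[F] (Fin k → F) := LinearMap.funLeft F F Sum.inl
    have hmem : ∀ v ∈ rowSpace (liftMat A) ⊓ rowSpace (liftMat B), proj v ∈ K := by
      intro v hv
      obtain ⟨hvA, hvB⟩ := hv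
      have h1 := mem_rowSpace_liftMat A v hvA
      have h2 := mem_rowSpace_liftMat B v hvB
      have h3 : (v ∘ Sum.inl) ᵥ* A = (v ∘ Sum.inl) ᵥ* B := by
        have := h1.symm.trans h2
        have := congrArg (fun w => w ∘ Sum.inr) this
        simpa using this
      simp only [K, LinearMap.mem_ker, Matrix.vecMulLinear_apply]
      have hp : proj v = v ∘ Sum.inl := rfl
      rw [hp, Matrix.vecMul_sub, h3, sub_self]
    let g : ↥(rowSpace (liftMat A) ⊓ rowSpace (liftMat B)) →ₗ[F] ↥K :=
      LinearMap.codRestrict K (proj ∘ₗ (rowSpace (liftMat A) ⊓ rowSpace (liftMat B)).subtype)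
        (fun v => hmem v.1 v.2)
    have hginj : Function.Injective g := by
      intro v w hvw
      have h : proj v.1 = proj w.1 := congrArg Subtype.val hvw
      have hvA := mem_rowSpace_liftMat A v.1 v.2.1
      have hwA := mem_rowSpace_liftMat A w.1 w.2.1
      have hcomp : v.1 ∘ Sum.inl = w.1 ∘ Sum.inl := h
      ext1
      rw [hvA, hwA, hcomp]
    calc Module.finrank F ↥(rowSpace (liftMat A) ⊓ rowSpace (liftMat B))
        ≤ Module.finrank F ↥K := LinearMap.finrank_le_finrank_of_injective hginj
      _ = k - (A - B).rank := finrank_ker_vecMul (A - B)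
      _ ≤ k - d := Nat.sub_le_sub_left (hM A hA B hB hAB) k
  refine ⟨fun A _ => hdim A, ?_, hinter, ?_⟩
  · intro A hA B hB heq
    by_contra hAB
    have h1 := hinter A hA B hB hAB
    rw [heq, inf_idem, hdim B] at h1
    omega
  · intro A hA B hB hAB
    have h1 := hinter A hA B hB hAB
    omega
end

section
/- Let F be a finite field, let d be an even positive integer, and let n, n1, n2, k be positive integers with n1 ≥ k, n2 ≥ k and n = n1 + n2. Let G1 be a set of k × n1 matrices over F of rank k whose row spaces are pairwise distinct and satisfy dim(R(G) ∩ R(G')) ≤ k − d/2 for all distinct G, G' ∈ G1, and let G2 be a set of k × n2 matrices of rank k with the same property. Let M2 be a set of k × n2 matrices with rank(M − M') ≥ d/2 for all distinct M, M' ∈ M2, and let M1 be a set of k × n1 matrices with rank(M − M') ≥ d/2 for all distinct M, M' ∈ M1 and with rank(M) ≤ k − d/2 for every M ∈ M1. Then C = { R(G | M) : G ∈ G1, M ∈ M2 } ∪ { R(M | G) : M ∈ M1, G ∈ G2 } is a set of k-dimensional subspaces of F^n satisfying dim(U ∩ V) ≤ k − d/2 for all distinct U, V ∈ C, and |C| =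 |G1|·|M2| + |M1|·|G2|. -/
open Matrix

section helpers
variable {F : Type*} [Field F] {k : ℕ} {m1 m2 : Type*} [Fintype m1] [Fintype m2]

lemma finrank_rowSpace [Fintype m1] (A : Matrix (Fin k) m1 F) :
    Module.finrank F (rowSpace A) = A.rank := by
  rw [rowSpace, range_vecMulLinear, Matrix.rank_eq_finrank_span_row]

lemma vecMulLinear_inj {A : Matrix (Fin k) m1 F} (h : A.rank = k) :
    Function.Injective A.vecMulLinear := by
  rw [← LinearMap.ker_eq_bot, ← Submodule.finrank_eq_zero (R := F)]
  have h1 := LinearMap.finrank_range_add_finrank_ker A.vecMulLinear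
  have h2 : Module.finrank F (LinearMap.range A.vecMulLinear) = k := by
    have h3 := finrank_rowSpace A; rw [rowSpace] at h3; omega
  rw [Module.finrank_fin_fun] at h1
  omega

lemma finrank_le_of_map {N P : Type*} [AddCommGroup N] [Module F N] [AddCommGroup P] [Module F P]
    [FiniteDimensional F N] [FiniteDimensional F P]
    (π : N →ₗ[F] P) (W : Submodule F N) (S : Submodule F P)
    (hinj : ∀ x ∈ W, π x = 0 → x = 0) (hmap : ∀ x ∈ W, π x ∈ S) :
    Module.finrank F W ≤ Module.finrank F S := by
  have h1 : Function.Injective (π.domRestrict W) := by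
    rw [← LinearMap.ker_eq_bot, eq_bot_iff]
    rintro ⟨x, hx⟩ hker
    simpa using hinj x hx (by simpa using hker)
  have h2 : LinearMap.range (π.domRestrict W) ≤ S := by
    rintro _ ⟨⟨x, hx⟩, rfl⟩
    exact hmap x hx
  calc Module.finrank F W = Module.finrank F (LinearMap.range (π.domRestrict W)) :=
        (LinearMap.finrank_range_of_inj h1).symm
    _ ≤ Module.finrank F S := Submodule.finrank_mono h2

lemma funLeft_inl_vecMul (G : Matrix (Fin k) m1 F) (M : Matrix (Fin k) m2 F) (v : Fin k → F) :
    LinearMap.funLeft F F (Sum.inl : m1 → m1 ⊕ m2) ((fromCols G M).vecMulLinear v)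
      = G.vecMulLinear v := by
  ext j; simp [LinearMap.funLeft_apply]

lemma funRight_inr_vecMul (M : Matrix (Fin k) m1 F) (G : Matrix (Fin k) m2 F) (v : Fin k → F) :
    LinearMap.funLeft F F (Sum.inr : m2 → m1 ⊕ m2) ((fromCols M G).vecMulLinear v)
      = G.vecMulLinear v := by
  ext j; simp [LinearMap.funLeft_apply]

lemma pi1_rowSpace (G : Matrix (Fin k) m1 F) (M : Matrix (Fin k) m2 F) :
    Submodule.map (LinearMap.funLeft F F (Sum.inl : m1 → m1 ⊕ m2))
      (rowSpace (fromCols G M)) = rowSpace G := by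
  apply le_antisymm
  · rintro _ ⟨_, ⟨v, rfl⟩, rfl⟩
    exact ⟨v, (funLeft_inl_vecMul G M v).symm⟩
  · rintro _ ⟨v, rfl⟩
    exact ⟨(fromCols G M).vecMulLinear v, ⟨v, rfl⟩, funLeft_inl_vecMul G M v⟩

lemma pi2_rowSpace (M : Matrix (Fin k) m1 F) (G : Matrix (Fin k) m2 F) :
    Submodule.map (LinearMap.funLeft F F (Sum.inr : m2 → m1 ⊕ m2))
      (rowSpace (fromCols M G)) = rowSpace G := by
  apply le_antisymm
  · rintro _ ⟨_, ⟨v, rfl⟩, rfl⟩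
    exact ⟨v, (funRight_inr_vecMul M G v).symm⟩
  · rintro _ ⟨v, rfl⟩
    exact ⟨(fromCols M G).vecMulLinear v, ⟨v, rfl⟩, funRight_inr_vecMul M G v⟩

lemma finrank_fromColumns_left (G : Matrix (Fin k) m1 F) (M : Matrix (Fin k) m2 F)
    (h : G.rank = k) : Module.finrank F (rowSpace (fromCols G M)) = k := by
  rw [rowSpace, LinearMap.finrank_range_of_inj, Module.finrank_fin_fun]
  intro v w hvw
  apply vecMulLinear_inj h
  have := congrArg (LinearMap.funLeft F F (Sum.inl : m1 → m1 ⊕ m2)) hvw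
  rwa [funLeft_inl_vecMul, funLeft_inl_vecMul] at this

lemma finrank_fromColumns_right (M : Matrix (Fin k) m1 F) (G : Matrix (Fin k) m2 F)
    (h : G.rank = k) : Module.finrank F (rowSpace (fromCols M G)) = k := by
  rw [rowSpace, LinearMap.finrank_range_of_inj, Module.finrank_fin_fun]
  intro v w hvw
  apply vecMulLinear_inj h
  have := congrArg (LinearMap.funLeft F F (Sum.inr : m2 → m1 ⊕ m2)) hvw
  rwa [funRight_inr_vecMul, funRight_inr_vecMul] at this


lemma inter_le_left (G G' : Matrix (Fin k) m1 F) (M M' : Matrix (Fin k) m2 F)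
    (hG : G.rank = k) :
    Module.finrank F ↥(rowSpace (fromCols G M) ⊓ rowSpace (fromCols G' M'))
      ≤ Module.finrank F ↥(rowSpace G ⊓ rowSpace G') := by
  apply finrank_le_of_map (LinearMap.funLeft F F (Sum.inl : m1 → m1 ⊕ m2))
  · rintro x ⟨⟨v, hv⟩, -⟩ hpi
    rw [← hv, funLeft_inl_vecMul] at hpi
    have hv0 : v = 0 := vecMulLinear_inj hG (by simpa using hpi)
    rw [← hv, hv0, map_zero]
  · rintro x ⟨⟨v, hv⟩, ⟨w, hw⟩⟩
    exact ⟨⟨v, by rw [← hv, funLeft_inl_vecMul]⟩, ⟨w, by rw [← hw, funLeft_inl_vecMul]⟩⟩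

lemma inter_le_right (M M' : Matrix (Fin k) m1 F) (G G' : Matrix (Fin k) m2 F)
    (hG : G.rank = k) :
    Module.finrank F ↥(rowSpace (fromCols M G) ⊓ rowSpace (fromCols M' G'))
      ≤ Module.finrank F ↥(rowSpace G ⊓ rowSpace G') := by
  apply finrank_le_of_map (LinearMap.funLeft F F (Sum.inr : m2 → m1 ⊕ m2))
  · rintro x ⟨⟨v, hv⟩, -⟩ hpi
    rw [← hv, funRight_inr_vecMul] at hpi
    have hv0 : v = 0 := vecMulLinear_inj hG (by simpa using hpi)
    rw [← hv, hv0, map_zero]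
  · rintro x ⟨⟨v, hv⟩, ⟨w, hw⟩⟩
    exact ⟨⟨v, by rw [← hv, funRight_inr_vecMul]⟩, ⟨w, by rw [← hw, funRight_inr_vecMul]⟩⟩

lemma inter_mixed (G : Matrix (Fin k) m1 F) (M : Matrix (Fin k) m2 F)
    (M' : Matrix (Fin k) m1 F) (G' : Matrix (Fin k) m2 F) (hG : G.rank = k) :
    Module.finrank F ↥(rowSpace (fromCols G M) ⊓ rowSpace (fromCols M' G'))
      ≤ M'.rank := by
  rw [← finrank_rowSpace M']
  apply finrank_le_of_map (LinearMap.funLeft F F (Sum.inl : m1 → m1 ⊕ m2))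
  · rintro x ⟨⟨v, hv⟩, -⟩ hpi
    rw [← hv, funLeft_inl_vecMul] at hpi
    have hv0 : v = 0 := vecMulLinear_inj hG (by simpa using hpi)
    rw [← hv, hv0, map_zero]
  · rintro x ⟨-, ⟨w, hw⟩⟩
    exact ⟨w, by rw [← hw]; ext j; simp [LinearMap.funLeft_apply]⟩

lemma inter_same_left (G : Matrix (Fin k) m1 F) (M M' : Matrix (Fin k) m2 F)
    (hG : G.rank = k) :
    Module.finrank F ↥(rowSpace (fromCols G M) ⊓ rowSpace (fromCols G M'))
      ≤ k - (M - M').rank := by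
  have hle : rowSpace (fromCols G M) ⊓ rowSpace (fromCols G M')
      ≤ Submodule.map (fromCols G M).vecMulLinear
          (LinearMap.ker (M - M').vecMulLinear) := by
    rintro x ⟨⟨v, hv⟩, ⟨w, hw⟩⟩
    have key := hv.trans hw.symm
    have hvw : v = w := by
      apply vecMulLinear_inj hG
      have := congrArg (LinearMap.funLeft F F (Sum.inl : m1 → m1 ⊕ m2)) key
      rwa [funLeft_inl_vecMul, funLeft_inl_vecMul] at this
    refine ⟨v, ?_, hv⟩
    simp only [SetLike.mem_coe, LinearMap.mem_ker]
    ext j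
    have h2 := congrFun key (Sum.inr j)
    simp only [vecMulLinear_apply, vecMul_fromCols, Sum.elim_inr] at h2
    rw [hvw] at h2 ⊢
    simp [Matrix.vecMul_sub, h2]
  have hker : Module.finrank F (LinearMap.ker (M - M').vecMulLinear) = k - (M - M').rank := by
    have h1 := LinearMap.finrank_range_add_finrank_ker (M - M').vecMulLinear
    have h2 : Module.finrank F (LinearMap.range (M - M').vecMulLinear) = (M - M').rank := by
      have h3 := finrank_rowSpace (M - M'); rwa [rowSpace] at h3
    rw [Module.finrank_fin_fun] at h1
    omega
  calc Module.finrank F ↥(rowSpace (fromCols G M) ⊓ rowSpace (fromCols G M'))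
      ≤ Module.finrank F ↥(Submodule.map (fromCols G M).vecMulLinear
          (LinearMap.ker (M - M').vecMulLinear)) := Submodule.finrank_mono hle
    _ ≤ Module.finrank F ↥(LinearMap.ker (M - M').vecMulLinear) := Submodule.finrank_map_le _ _
    _ = k - (M - M').rank := hker

lemma inter_same_right (M M' : Matrix (Fin k) m1 F) (G : Matrix (Fin k) m2 F)
    (hG : G.rank = k) :
    Module.finrank F ↥(rowSpace (fromCols M G) ⊓ rowSpace (fromCols M' G))
      ≤ k - (M - M').rank := by
  have hle : rowSpace (fromCols M G) ⊓ rowSpace (fromCols M' G)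
      ≤ Submodule.map (fromCols M G).vecMulLinear
          (LinearMap.ker (M - M').vecMulLinear) := by
    rintro x ⟨⟨v, hv⟩, ⟨w, hw⟩⟩
    have key := hv.trans hw.symm
    have hvw : v = w := by
      apply vecMulLinear_inj hG
      have := congrArg (LinearMap.funLeft F F (Sum.inr : m2 → m1 ⊕ m2)) key
      rwa [funRight_inr_vecMul, funRight_inr_vecMul] at this
    refine ⟨v, ?_, hv⟩
    simp only [SetLike.mem_coe, LinearMap.mem_ker]
    ext j
    have h2 := congrFun key (Sum.inl j)
    simp only [vecMulLinear_apply, vecMul_fromCols, Sum.elim_inl] at h2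
    rw [hvw] at h2 ⊢
    simp [Matrix.vecMul_sub, h2]
  have hker : Module.finrank F (LinearMap.ker (M - M').vecMulLinear) = k - (M - M').rank := by
    have h1 := LinearMap.finrank_range_add_finrank_ker (M - M').vecMulLinear
    have h2 : Module.finrank F (LinearMap.range (M - M').vecMulLinear) = (M - M').rank := by
      have h3 := finrank_rowSpace (M - M'); rwa [rowSpace] at h3
    rw [Module.finrank_fin_fun] at h1
    omega
  calc Module.finrank F ↥(rowSpace (fromCols M G) ⊓ rowSpace (fromCols M' G))
      ≤ Module.finrank F ↥(Submodule.map (fromCols M G).vecMulLinear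
          (LinearMap.ker (M - M').vecMulLinear)) := Submodule.finrank_mono hle
    _ ≤ Module.finrank F ↥(LinearMap.ker (M - M').vecMulLinear) := Submodule.finrank_map_le _ _
    _ = k - (M - M').rank := hker

lemma ncard_prod' {α β : Type*} (s : Set α) (t : Set β) :
    (s ×ˢ t).ncard = s.ncard * t.ncard := by
  rw [← Nat.card_coe_set_eq, ← Nat.card_coe_set_eq, ← Nat.card_coe_set_eq,
    ← Nat.card_prod]
  exact Nat.card_congr (Equiv.Set.prod s t)

end helpers


/-- the CKMP linkage construction (Lemma 4.1 of Cossidente–Kurz–Marino–Pavese):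
combining two constant dimension codes (given by full-rank generator matrices) with
rank metric codes, one of them rank-restricted, yields a constant dimension code. -/
theorem linkage_construction
    (F : Type*) [Field F] [Fintype F] (d n1 n2 k : ℕ)
    (hd : 0 < d) (hd2 : 2 ∣ d) (hk : 0 < k) (hn1 : k ≤ n1) (hn2 : k ≤ n2)
    (G1 : Set (Matrix (Fin k) (Fin n1) F)) (G2 : Set (Matrix (Fin k) (Fin n2) F))
    (M1 : Set (Matrix (Fin k) (Fin n1) F)) (M2 : Set (Matrix (Fin k) (Fin n2) F))
    (hG1rank : ∀ G ∈ G1, G.rank = k)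
    (hG1 : ∀ G ∈ G1, ∀ G' ∈ G1, G ≠ G' →
      rowSpace G ≠ rowSpace G' ∧
        Module.finrank F ↥(rowSpace G ⊓ rowSpace G') ≤ k - d / 2)
    (hG2rank : ∀ G ∈ G2, G.rank = k)
    (hG2 : ∀ G ∈ G2, ∀ G' ∈ G2, G ≠ G' →
      rowSpace G ≠ rowSpace G' ∧
        Module.finrank F ↥(rowSpace G ⊓ rowSpace G') ≤ k - d / 2)
    (hM2 : ∀ M ∈ M2, ∀ M' ∈ M2, M ≠ M' → d / 2 ≤ (M - M').rank)
    (hM1 : ∀ M ∈ M1, ∀ M' ∈ M1, M ≠ M' → d / 2 ≤ (M - M').rank)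
    (hM1rank : ∀ M ∈ M1, M.rank ≤ k - d / 2) :
    let C : Set (Submodule F (Fin n1 ⊕ Fin n2 → F)) :=
      {U | ∃ G ∈ G1, ∃ M ∈ M2, U = rowSpace (Matrix.fromCols G M)} ∪
        {U | ∃ M ∈ M1, ∃ G ∈ G2, U = rowSpace (Matrix.fromCols M G)}
    (∀ U ∈ C, Module.finrank F ↥U = k) ∧
    (∀ U ∈ C, ∀ V ∈ C, U ≠ V → Module.finrank F ↥(U ⊓ V) ≤ k - d / 2) ∧
    C.ncard = G1.ncard * M2.ncard + M1.ncard * G2.ncard := by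
  intro C
  have hd1 : 1 ≤ d / 2 := by omega
  refine ⟨?_, ?_, ?_⟩
  · rintro U (⟨G, hG, M, hM, rfl⟩ | ⟨M, hM, G, hG, rfl⟩)
    · exact finrank_fromColumns_left G M (hG1rank G hG)
    · exact finrank_fromColumns_right M G (hG2rank G hG)
  · rintro U (⟨G, hG, M, hM, rfl⟩ | ⟨M, hM, G, hG, rfl⟩)
      V (⟨G', hG', M', hM', rfl⟩ | ⟨M', hM', G', hG', rfl⟩) hUV
    · by_cases hGG : G = G'
      · subst hGG
        have hMM : M ≠ M' := by rintro rfl; exact hUV rfl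
        have h1 := inter_same_left G M M' (hG1rank G hG)
        have h2 := hM2 M hM M' hM' hMM
        omega
      · exact le_trans (inter_le_left G G' M M' (hG1rank G hG)) (hG1 G hG G' hG' hGG).2
    · exact le_trans (inter_mixed G M M' G' (hG1rank G hG)) (hM1rank M' hM')
    · rw [inf_comm]
      exact le_trans (inter_mixed G' M' M G (hG1rank G' hG')) (hM1rank M hM)
    · by_cases hGG : G = G'
      · subst hGG
        have hMM : M ≠ M' := by rintro rfl; exact hUV rfl
        have h1 := inter_same_right M M' G (hG2rank G hG)
        have h2 := hM1 M hM M' hM' hMM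
        omega
      · exact le_trans (inter_le_right M M' G G' (hG2rank G hG)) (hG2 G hG G' hG' hGG).2
  · have hC1 : {U : Submodule F (Fin n1 ⊕ Fin n2 → F) |
        ∃ G ∈ G1, ∃ M ∈ M2, U = rowSpace (fromCols G M)}
        = (fun p : Matrix (Fin k) (Fin n1) F × Matrix (Fin k) (Fin n2) F =>
            rowSpace (fromCols p.1 p.2)) '' (G1 ×ˢ M2) := by
      ext U
      constructor
      · rintro ⟨G, hG, M, hM, rfl⟩; exact ⟨(G, M), ⟨hG, hM⟩, rfl⟩
      · rintro ⟨⟨G, M⟩, ⟨hG, hM⟩, rfl⟩; exact ⟨G, hG, M, hM, rfl⟩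
    have hC2 : {U : Submodule F (Fin n1 ⊕ Fin n2 → F) |
        ∃ M ∈ M1, ∃ G ∈ G2, U = rowSpace (fromCols M G)}
        = (fun p : Matrix (Fin k) (Fin n1) F × Matrix (Fin k) (Fin n2) F =>
            rowSpace (fromCols p.1 p.2)) '' (M1 ×ˢ G2) := by
      ext U
      constructor
      · rintro ⟨M, hM, G, hG, rfl⟩; exact ⟨(M, G), ⟨hM, hG⟩, rfl⟩
      · rintro ⟨⟨M, G⟩, ⟨hM, hG⟩, rfl⟩; exact ⟨M, hM, G, hG, rfl⟩
    have hinj1 : Set.InjOn (fun p : Matrix (Fin k) (Fin n1) F × Matrix (Fin k) (Fin n2) F =>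
        rowSpace (fromCols p.1 p.2)) (G1 ×ˢ M2) := by
      rintro ⟨G, M⟩ ⟨hG, hM⟩ ⟨G', M'⟩ ⟨hG', hM'⟩ heq
      simp only at heq hG hM hG' hM'
      have hGG : G = G' := by
        by_contra hne
        apply (hG1 G hG G' hG' hne).1
        rw [← pi1_rowSpace G M, ← pi1_rowSpace G' M', heq]
      subst hGG
      have hMM : M = M' := by
        by_contra hne
        have h1 := inter_same_left G M M' (hG1rank G hG)
        rw [heq, inf_idem, finrank_fromColumns_left G M' (hG1rank G hG)] at h1
        have h2 := hM2 M hM M' hM' hne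
        omega
      rw [hMM]
    have hinj2 : Set.InjOn (fun p : Matrix (Fin k) (Fin n1) F × Matrix (Fin k) (Fin n2) F =>
        rowSpace (fromCols p.1 p.2)) (M1 ×ˢ G2) := by
      rintro ⟨M, G⟩ ⟨hM, hG⟩ ⟨M', G'⟩ ⟨hM', hG'⟩ heq
      simp only at heq hG hM hG' hM'
      have hGG : G = G' := by
        by_contra hne
        apply (hG2 G hG G' hG' hne).1
        rw [← pi2_rowSpace M G, ← pi2_rowSpace M' G', heq]
      subst hGG
      have hMM : M = M' := by
        by_contra hne
        have h1 := inter_same_right M M' G (hG2rank G hG)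
        rw [heq, inf_idem, finrank_fromColumns_right M' G (hG2rank G hG)] at h1
        have h2 := hM1 M hM M' hM' hne
        omega
      rw [hMM]
    have hdisj : Disjoint
        ((fun p : Matrix (Fin k) (Fin n1) F × Matrix (Fin k) (Fin n2) F =>
            rowSpace (fromCols p.1 p.2)) '' (G1 ×ˢ M2))
        ((fun p : Matrix (Fin k) (Fin n1) F × Matrix (Fin k) (Fin n2) F =>
            rowSpace (fromCols p.1 p.2)) '' (M1 ×ˢ G2)) := by
      rw [Set.disjoint_left]
      rintro U ⟨⟨G, M⟩, ⟨hG, hM⟩, rfl⟩ ⟨⟨M', G'⟩, ⟨hM', hG'⟩, heq⟩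
      simp only at heq hG hM hG' hM'
      have h1 := inter_mixed G M M' G' (hG1rank G hG)
      rw [heq, inf_idem, finrank_fromColumns_left G M (hG1rank G hG)] at h1
      have h2 := hM1rank M' hM'
      omega
    show ({U : Submodule F (Fin n1 ⊕ Fin n2 → F) |
        ∃ G ∈ G1, ∃ M ∈ M2, U = rowSpace (fromCols G M)} ∪
        {U | ∃ M ∈ M1, ∃ G ∈ G2, U = rowSpace (fromCols M G)}).ncard
        = G1.ncard * M2.ncard + M1.ncard * G2.ncard
    rw [hC1, hC2, Set.ncard_union_eq hdisj ((Set.toFinite _).image _) ((Set.toFinite _).image _),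
      Set.ncard_image_of_injOn hinj1, Set.ncard_image_of_injOn hinj2, ncard_prod', ncard_prod']
end

section
/- Let F be a finite field, let d be an even positive integer, let n = n1 + n2, and let S1 ⊆ F^n be the subspace of vectors whose first n1 coordinates are zero and S2 ⊆ F^n the subspace of vectors whose last n2 coordinates are zero. Let U be a k-dimensional subspace of F^n with dim(U ∩ S1) ≥ d/2 and dim(U ∩ S2) ≥ d/2, and let W be a k-dimensional subspace of F^n with W ∩ S1 = 0 or W ∩ S2 = 0. Then dim(U ∩ W) ≤ k − d/2; equivalently, the subspace distance satisfies dis(U, W) = 2k − 2·dim(U ∩ W) ≥ d. -/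
open Matrix

/-- `S1`: the subspace of `F^(n1+n2)` of vectors whose first `n1` coordinates are zero. -/
noncomputable def firstZero (F : Type*) [Field F] (n1 n2 : ℕ) :
    Submodule F (Fin n1 ⊕ Fin n2 → F) :=
  LinearMap.ker (LinearMap.funLeft F F (Sum.inl : Fin n1 → Fin n1 ⊕ Fin n2))

/-- `S2`: the subspace of `F^(n1+n2)` of vectors whose last `n2` coordinates are zero. -/
noncomputable def lastZero (F : Type*) [Field F] (n1 n2 : ℕ) :
    Submodule F (Fin n1 ⊕ Fin n2 → F) :=
  LinearMap.ker (LinearMap.funLeft F F (Sum.inr : Fin n2 → Fin n1 ⊕ Fin n2))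


lemma aux_disjoint_rank {F V : Type*} [Field F] [AddCommGroup V] [Module F V]
    [FiniteDimensional F V] (A B C : Submodule F V)
    (hA : A ≤ C) (hB : B ≤ C) (hAB : A ⊓ B = ⊥) :
    Module.finrank F ↥A + Module.finrank F ↥B ≤ Module.finrank F ↥C := by
  have h := Submodule.finrank_sup_add_finrank_inf_eq A B
  rw [hAB] at h
  simp only [finrank_bot, add_zero] at h
  rw [← h]
  exact Submodule.finrank_mono (sup_le hA hB)

/-- a sufficient condition for inserting a subspace: if `U` meets `S1` and
`S2` each in dimension at least `d/2`, and `W` meets `S1` or `S2` trivially, then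
`dim(U ∩ W) ≤ k - d/2`, i.e. `dis(U,W) ≥ d`. -/
theorem inserting_sufficient_condition
    (F : Type*) [Field F] [Fintype F] (d n1 n2 k : ℕ)
    (hd : 0 < d) (hd2 : 2 ∣ d)
    (U W : Submodule F (Fin n1 ⊕ Fin n2 → F))
    (hU : Module.finrank F ↥U = k) (hW : Module.finrank F ↥W = k)
    (hUS1 : d / 2 ≤ Module.finrank F ↥(U ⊓ firstZero F n1 n2))
    (hUS2 : d / 2 ≤ Module.finrank F ↥(U ⊓ lastZero F n1 n2))
    (hWS : W ⊓ firstZero F n1 n2 = ⊥ ∨ W ⊓ lastZero F n1 n2 = ⊥) :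
    Module.finrank F ↥(U ⊓ W) ≤ k - d / 2 ∧
      d ≤ 2 * k - 2 * Module.finrank F ↥(U ⊓ W) := by
  have hfin : FiniteDimensional F (Fin n1 ⊕ Fin n2 → F) := by infer_instance
  obtain ⟨m, rfl⟩ := hd2
  have hm : 2 * m / 2 = m := by omega
  rw [hm] at hUS1 hUS2 ⊢
  have key : Module.finrank F ↥(U ⊓ W) + m ≤ k := by
    rcases hWS with h | h
    · have hb : (U ⊓ W) ⊓ (U ⊓ firstZero F n1 n2) = ⊥ := by
        rw [eq_bot_iff, ← h]
        exact fun x hx => ⟨hx.1.2, hx.2.2⟩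
      have := aux_disjoint_rank (U ⊓ W) (U ⊓ firstZero F n1 n2) U inf_le_left inf_le_left hb
      omega
    · have hb : (U ⊓ W) ⊓ (U ⊓ lastZero F n1 n2) = ⊥ := by
        rw [eq_bot_iff, ← h]
        exact fun x hx => ⟨hx.1.2, hx.2.2⟩
      have := aux_disjoint_rank (U ⊓ W) (U ⊓ lastZero F n1 n2) U inf_le_left inf_le_left hb
      omega
  omega
end

section
/- Let F be a finite field, let d be an even positive integer, and let n1, n2, a1, a2, g1, g2, k, s be positive integers with a1 + a2 = k, g1 + g2 = k − d/2, and for i = 1,2: g_i < a_i ≤ n_i and a_i ≥ d/2. For i = 1,2 and j = 1,…,s let D_i^j be a set of a_i-dimensional subspaces of F^{n_i} such that dim(U ∩ U') ≤ a_i − d/2 for all distinct U, U' ∈ D_i^j, and such that dim(U ∩ U') ≤ g_i for all U ∈ D_i^j and U' ∈ D_i^{j'} whenever j ≠ j'. For j = 1,…,s set D_j = { U1 × U2 : U1 ∈ D_1^j, U2 ∈ D_2^j }, where U1 × U2 denotes the product subspace of F^{n1} × F^{n2}. Then every element of D = ∪_{j=1}^s D_j is a k-dimensional subspace of F^{n1}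 × F^{n2}, and dim(V ∩ V') ≤ k − d/2 for all distinct V, V' ∈ D; that is, D is a constant dimension code with subspace distance at least d. -/
/-- Linear equivalence between a product submodule and the product of submodules. -/
def submoduleProdEquiv {R M N : Type*} [Ring R] [AddCommGroup M] [AddCommGroup N]
    [Module R M] [Module R N] (p : Submodule R M) (q : Submodule R N) :
    ↥(p.prod q) ≃ₗ[R] ↥p × ↥q where
  toFun x := (⟨x.1.1, x.2.1⟩, ⟨x.1.2, x.2.2⟩)
  invFun y := ⟨(y.1.1, y.2.1), ⟨y.1.2, y.2.2⟩⟩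
  left_inv x := rfl
  right_inv y := rfl
  map_add' x y := rfl
  map_smul' c x := rfl

lemma finrank_submodule_prod {F M N : Type*} [Field F] [AddCommGroup M] [AddCommGroup N]
    [Module F M] [Module F N] (p : Submodule F M) (q : Submodule F N)
    [FiniteDimensional F ↥p] [FiniteDimensional F ↥q] :
    Module.finrank F ↥(p.prod q) = Module.finrank F ↥p + Module.finrank F ↥q := by
  rw [(submoduleProdEquiv p q).finrank_eq, Module.finrank_prod]


/-- the CKMP combining construction (Lemma 4.4 of
Cossidente–Kurz–Marino–Pavese, case `l = 2`): products of subspaces from families of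
CDCs with controlled pairwise intersections form a constant dimension code with
subspace distance at least `d`. -/
theorem ckmp_product_construction
    (F : Type*) [Field F] [Fintype F] (d n1 n2 a1 a2 g1 g2 k s : ℕ)
    (hd : 0 < d) (hd2 : 2 ∣ d) (hs : 0 < s)
    (hn1 : 0 < n1) (hn2 : 0 < n2) (hg1 : 0 < g1) (hg2 : 0 < g2)
    (hk : a1 + a2 = k) (hg : g1 + g2 = k - d / 2)
    (hga1 : g1 < a1) (hga2 : g2 < a2) (ha1n : a1 ≤ n1) (ha2n : a2 ≤ n2)
    (ha1d : d / 2 ≤ a1) (ha2d : d / 2 ≤ a2)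
    (D1 : Fin s → Set (Submodule F (Fin n1 → F)))
    (D2 : Fin s → Set (Submodule F (Fin n2 → F)))
    (hdim1 : ∀ j, ∀ U ∈ D1 j, Module.finrank F ↥U = a1)
    (hdim2 : ∀ j, ∀ U ∈ D2 j, Module.finrank F ↥U = a2)
    (hin1 : ∀ j, ∀ U ∈ D1 j, ∀ U' ∈ D1 j, U ≠ U' →
      Module.finrank F ↥(U ⊓ U') ≤ a1 - d / 2)
    (hin2 : ∀ j, ∀ U ∈ D2 j, ∀ U' ∈ D2 j, U ≠ U' →
      Module.finrank F ↥(U ⊓ U') ≤ a2 - d / 2)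
    (hcross1 : ∀ j j', j ≠ j' → ∀ U ∈ D1 j, ∀ U' ∈ D1 j',
      Module.finrank F ↥(U ⊓ U') ≤ g1)
    (hcross2 : ∀ j j', j ≠ j' → ∀ U ∈ D2 j, ∀ U' ∈ D2 j',
      Module.finrank F ↥(U ⊓ U') ≤ g2) :
    let D : Set (Submodule F ((Fin n1 → F) × (Fin n2 → F))) :=
      ⋃ j, {V | ∃ U1 ∈ D1 j, ∃ U2 ∈ D2 j, V = Submodule.prod U1 U2}
    (∀ V ∈ D, Module.finrank F ↥V = k) ∧
    (∀ V ∈ D, ∀ V' ∈ D, V ≠ V' → Module.finrank F ↥(V ⊓ V') ≤ k - d / 2) := by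
  intro D
  constructor
  · rintro V hV
    simp only [D, Set.mem_iUnion, Set.mem_setOf_eq] at hV
    obtain ⟨j, U1, h1, U2, h2, rfl⟩ := hV
    rw [finrank_submodule_prod, hdim1 j U1 h1, hdim2 j U2 h2, hk]
  · rintro V hV V' hV' hne
    simp only [D, Set.mem_iUnion, Set.mem_setOf_eq] at hV hV'
    obtain ⟨j, U1, h1, U2, h2, rfl⟩ := hV
    obtain ⟨j', U1', h1', U2', h2', rfl⟩ := hV'
    rw [Submodule.prod_inf_prod, finrank_submodule_prod]
    by_cases hj : j = j'
    · subst hj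
      by_cases hU1 : U1 = U1'
      · have hU2 : U2 ≠ U2' := by
          intro h; exact hne (by rw [hU1, h])
        subst hU1
        have b1 : Module.finrank F ↥(U1 ⊓ U1) ≤ a1 := by
          rw [inf_idem]; exact (hdim1 j U1 h1).le
        have b2 := hin2 j U2 h2 U2' h2' hU2
        omega
      · have b1 := hin1 j U1 h1 U1' h1' hU1
        have b2 : Module.finrank F ↥(U2 ⊓ U2') ≤ a2 := by
          calc Module.finrank F ↥(U2 ⊓ U2') ≤ Module.finrank F ↥U2' :=
                Submodule.finrank_mono inf_le_right
            _ = a2 := hdim2 j U2' h2'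
        omega
    · have b1 := hcross1 j j' hj U1 h1 U1' h1'
      have b2 := hcross2 j j' hj U2 h2 U2' h2'
      omega
end

section
/- Let F be a finite field, let d be an even positive integer, and let n1, n2, a1, a2, b1, b2, s be positive integers with n1 + n2 = n, a1 + a2 = k, b1 + b2 ≥ d/2, and for i = 1,2: n_i ≥ k, a_i ≥ d/2 and 1 ≤ b_i ≤ d/2. Let M_{1,2} be a set of a1 × (n2 − a2) matrices over F with pairwise rank distance ≥ d/2, and M_{2,1} a set of a2 × (n1 − a1) matrices with pairwise rank distance ≥ d/2. For r = 1,…,s let M_{1,1}^r be a set of a1 × (n1 − a1) matrices with pairwise rank distance ≥ d/2 and M_{2,2}^r a set of a2 × (n2 − a2) matrices with pairwise rank distance ≥ d/2, such that for all r ≠ r', i ∈ {1,2}, M ∈ M_{i,i}^r and M' ∈ M_{i,i}^{r'}, one has M ≠ M' and rank(M − M') ≥ b_i. For r = 1,…,s let N_r be the set of row spaces of the k × n block matrices with row blocks of sizes a1, a2 and column blocks of sizes a1, n1−a1, a2, n2−a2 given by ( I_{a1}, M_{1,1}, 0, M_{1,2} ; 0, M_{2,1}, I_{a2}, M_{2,2}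 ), where M_{1,1} ∈ M_{1,1}^r, M_{2,2} ∈ M_{2,2}^r, M_{1,2} ∈ M_{1,2}, M_{2,1} ∈ M_{2,1}. Then every element of N = ∪_{r=1}^s N_r is a k-dimensional subspace of F^n, and whenever W_1 ∈ N_r and W_2 ∈ N_{r'} arise from different generator matrices (in particular whenever W_1 ≠ W_2), dim(W_1 ∩ W_2) ≤ k − d/2; that is, N is an (n,*,d,k) constant dimension code. -/
open Matrix

/-- The generator matrix `( I_{a1}, M11, 0, M12 ; 0, M21, I_{a2}, M22 )` with row blocks
of sizes `a1, a2` and column blocks of sizes `a1, p1, a2, p2`. -/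
def gen6 {F : Type*} [Field F] {a1 a2 p1 p2 : ℕ}
    (M11 : Matrix (Fin a1) (Fin p1) F) (M12 : Matrix (Fin a1) (Fin p2) F)
    (M21 : Matrix (Fin a2) (Fin p1) F) (M22 : Matrix (Fin a2) (Fin p2) F) :
    Matrix (Fin a1 ⊕ Fin a2) ((Fin a1 ⊕ Fin p1) ⊕ (Fin a2 ⊕ Fin p2)) F :=
  Matrix.fromBlocks (Matrix.fromCols 1 M11) (Matrix.fromCols 0 M12)
    (Matrix.fromCols 0 M21) (Matrix.fromCols 1 M22)

def cmap (a1 a2 p1 p2 : ℕ) : Fin a1 ⊕ Fin a2 → (Fin a1 ⊕ Fin p1) ⊕ (Fin a2 ⊕ Fin p2) :=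
  Sum.elim (fun i => Sum.inl (Sum.inl i)) (fun j => Sum.inr (Sum.inl j))

section Aux

variable {F : Type*} [Field F]

/-- rank of an arbitrary submatrix is at most the rank. -/
lemma rank_submatrix_le' {m n m' n' : Type*} [Fintype m] [Fintype n] [Fintype m'] [Fintype n']
    [DecidableEq m] [DecidableEq n]
    (A : Matrix m n F) (f : m' → m) (g : n' → n) :
    (A.submatrix f g).rank ≤ A.rank := by
  have h : A.submatrix f g =
      (Matrix.of fun (i : m') (k : m) => if k = f i then (1 : F) else 0) * A *
      (Matrix.of fun (k : n) (j : n') => if k = g j then (1 : F) else 0) := by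
    ext i j
    simp [Matrix.mul_apply, ite_mul, mul_ite, Finset.sum_ite_eq']
  rw [h]
  exact le_trans (Matrix.rank_mul_le_left _ _) (Matrix.rank_mul_le_right _ _)

lemma finrank_range_vecMulLinear {m n : Type*} [Fintype m] [Fintype n]
    (A : Matrix m n F) :
    Module.finrank F (LinearMap.range A.vecMulLinear) = A.rank := by
  have h : A.vecMulLinear = Aᵀ.mulVecLin := by
    rw [← Matrix.vecMulLinear_transpose, Matrix.transpose_transpose]
  rw [h]
  show Aᵀ.rank = A.rank
  exact Matrix.rank_transpose A

lemma finrank_ker_vecMulLinear {m n : Type*} [Fintype m] [Fintype n]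
    (A : Matrix m n F) :
    Module.finrank F (LinearMap.ker A.vecMulLinear) + A.rank = Fintype.card m := by
  have := LinearMap.finrank_range_add_finrank_ker A.vecMulLinear
  rw [finrank_range_vecMulLinear] at this
  rw [Module.finrank_fintype_fun_eq_card] at this
  omega

end Aux

section Gen6

variable {F : Type*} [Field F] {a1 a2 p1 p2 : ℕ}
  (M11 : Matrix (Fin a1) (Fin p1) F) (M12 : Matrix (Fin a1) (Fin p2) F)
  (M21 : Matrix (Fin a2) (Fin p1) F) (M22 : Matrix (Fin a2) (Fin p2) F)

lemma gen6_coord (x : Fin a1 ⊕ Fin a2 → F) (i : Fin a1 ⊕ Fin a2) :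
    (x ᵥ* gen6 M11 M12 M21 M22) (cmap a1 a2 p1 p2 i) = x i := by
  cases i with
  | inl i =>
    simp [cmap, gen6, Matrix.vecMul, dotProduct, Fintype.sum_sum_type,
      Matrix.one_apply, mul_ite, Finset.sum_ite_eq']
  | inr i =>
    simp [cmap, gen6, Matrix.vecMul, dotProduct, Fintype.sum_sum_type,
      Matrix.one_apply, mul_ite, Finset.sum_ite_eq']

lemma gen6_recover {v : ((Fin a1 ⊕ Fin p1) ⊕ (Fin a2 ⊕ Fin p2)) → F}
    (hv : v ∈ rowSpace (gen6 M11 M12 M21 M22)) :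
    (v ∘ cmap a1 a2 p1 p2) ᵥ* gen6 M11 M12 M21 M22 = v := by
  obtain ⟨x, rfl⟩ := hv
  simp only [Matrix.vecMulLinear_apply]
  have h : (x ᵥ* gen6 M11 M12 M21 M22) ∘ cmap a1 a2 p1 p2 = x :=
    funext fun i => gen6_coord M11 M12 M21 M22 x i
  rw [h]

lemma finrank_rowSpace_gen6 :
    Module.finrank F ↥(rowSpace (gen6 M11 M12 M21 M22)) = a1 + a2 := by
  have hinj : Function.Injective (gen6 M11 M12 M21 M22).vecMulLinear := by
    rw [← LinearMap.ker_eq_bot]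
    refine (Submodule.eq_bot_iff _).2 fun x hx => ?_
    have hx' : x ᵥ* gen6 M11 M12 M21 M22 = 0 := by simpa using hx
    funext i
    have h := gen6_coord M11 M12 M21 M22 x i
    rw [hx'] at h
    simpa using h.symm
  rw [rowSpace, LinearMap.finrank_range_of_inj hinj,
    Module.finrank_fintype_fun_eq_card]
  simp

lemma inter_le_ker (M11' : Matrix (Fin a1) (Fin p1) F) (M12' : Matrix (Fin a1) (Fin p2) F)
    (M21' : Matrix (Fin a2) (Fin p1) F) (M22' : Matrix (Fin a2) (Fin p2) F) :
    Module.finrank F ↥(rowSpace (gen6 M11 M12 M21 M22) ⊓ rowSpace (gen6 M11' M12' M21' M22')) ≤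
    Module.finrank F
      ↥(LinearMap.ker (gen6 M11 M12 M21 M22 - gen6 M11' M12' M21' M22').vecMulLinear) := by
  set G := gen6 M11 M12 M21 M22
  set G' := gen6 M11' M12' M21' M22'
  set W := rowSpace G ⊓ rowSpace G'
  set K := LinearMap.ker (G - G').vecMulLinear
  have hmem : ∀ v : ↥W, (LinearMap.funLeft F F (cmap a1 a2 p1 p2)).comp W.subtype v ∈ K := by
    intro v
    have h1 : (v.1 ∘ cmap a1 a2 p1 p2) ᵥ* G = v.1 :=
      gen6_recover M11 M12 M21 M22 v.2.1
    have h2 : (v.1 ∘ cmap a1 a2 p1 p2) ᵥ* G' = v.1 :=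
      gen6_recover M11' M12' M21' M22' v.2.2
    rw [LinearMap.mem_ker]
    show (v.1 ∘ cmap a1 a2 p1 p2) ᵥ* (G - G') = 0
    rw [Matrix.vecMul_sub, h1, h2, sub_self]
  let φ : ↥W →ₗ[F] ↥K :=
    LinearMap.codRestrict K ((LinearMap.funLeft F F (cmap a1 a2 p1 p2)).comp W.subtype) hmem
  have hφinj : Function.Injective φ := by
    intro v w h
    have h' : v.1 ∘ cmap a1 a2 p1 p2 = w.1 ∘ cmap a1 a2 p1 p2 := congrArg Subtype.val h
    apply Subtype.ext
    calc v.1 = (v.1 ∘ cmap a1 a2 p1 p2) ᵥ* G := (gen6_recover M11 M12 M21 M22 v.2.1).symm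
      _ = (w.1 ∘ cmap a1 a2 p1 p2) ᵥ* G := by rw [h']
      _ = w.1 := gen6_recover M11 M12 M21 M22 w.2.1
  exact LinearMap.finrank_le_finrank_of_injective hφinj

lemma gen6_sub_sub11 (M11' : Matrix (Fin a1) (Fin p1) F) (M12' : Matrix (Fin a1) (Fin p2) F)
    (M21' : Matrix (Fin a2) (Fin p1) F) (M22' : Matrix (Fin a2) (Fin p2) F) :
    (gen6 M11 M12 M21 M22 - gen6 M11' M12' M21' M22').submatrix Sum.inl
      (fun j => Sum.inl (Sum.inr j)) = M11 - M11' := by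
  ext i j; simp [gen6]

lemma gen6_sub_sub12 (M11' : Matrix (Fin a1) (Fin p1) F) (M12' : Matrix (Fin a1) (Fin p2) F)
    (M21' : Matrix (Fin a2) (Fin p1) F) (M22' : Matrix (Fin a2) (Fin p2) F) :
    (gen6 M11 M12 M21 M22 - gen6 M11' M12' M21' M22').submatrix Sum.inl
      (fun j => Sum.inr (Sum.inr j)) = M12 - M12' := by
  ext i j; simp [gen6]

lemma gen6_sub_sub21 (M11' : Matrix (Fin a1) (Fin p1) F) (M12' : Matrix (Fin a1) (Fin p2) F)
    (M21' : Matrix (Fin a2) (Fin p1) F) (M22' : Matrix (Fin a2) (Fin p2) F) :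
    (gen6 M11 M12 M21 M22 - gen6 M11' M12' M21' M22').submatrix Sum.inr
      (fun j => Sum.inl (Sum.inr j)) = M21 - M21' := by
  ext i j; simp [gen6]

lemma gen6_sub_sub22 (M11' : Matrix (Fin a1) (Fin p1) F) (M12' : Matrix (Fin a1) (Fin p2) F)
    (M21' : Matrix (Fin a2) (Fin p1) F) (M22' : Matrix (Fin a2) (Fin p2) F) :
    (gen6 M11 M12 M21 M22 - gen6 M11' M12' M21' M22').submatrix Sum.inr
      (fun j => Sum.inr (Sum.inr j)) = M22 - M22' := by
  ext i j; simp [gen6]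

lemma gen6_sub_col1 (M11' : Matrix (Fin a1) (Fin p1) F) (M22' : Matrix (Fin a2) (Fin p2) F)
    (x : Fin a1 ⊕ Fin a2 → F) (j : Fin p1) :
    (x ᵥ* (gen6 M11 M12 M21 M22 - gen6 M11' M12 M21 M22')) (Sum.inl (Sum.inr j)) =
    ((x ∘ Sum.inl) ᵥ* (M11 - M11')) j := by
  simp [gen6, Matrix.vecMul, dotProduct, Fintype.sum_sum_type, mul_sub]

lemma gen6_sub_col2 (M11' : Matrix (Fin a1) (Fin p1) F) (M22' : Matrix (Fin a2) (Fin p2) F)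
    (x : Fin a1 ⊕ Fin a2 → F) (j : Fin p2) :
    (x ᵥ* (gen6 M11 M12 M21 M22 - gen6 M11' M12 M21 M22')) (Sum.inr (Sum.inr j)) =
    ((x ∘ Sum.inr) ᵥ* (M22 - M22')) j := by
  simp [gen6, Matrix.vecMul, dotProduct, Fintype.sum_sum_type, mul_sub]

lemma ker_gen6_sub_le (M11' : Matrix (Fin a1) (Fin p1) F) (M22' : Matrix (Fin a2) (Fin p2) F) :
    Module.finrank F
      ↥(LinearMap.ker (gen6 M11 M12 M21 M22 - gen6 M11' M12 M21 M22').vecMulLinear) ≤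
    Module.finrank F ↥(LinearMap.ker (M11 - M11').vecMulLinear) +
      Module.finrank F ↥(LinearMap.ker (M22 - M22').vecMulLinear) := by
  set Δ := gen6 M11 M12 M21 M22 - gen6 M11' M12 M21 M22'
  set K := LinearMap.ker Δ.vecMulLinear
  have hmem1 : ∀ x : ↥K, (LinearMap.funLeft F F Sum.inl).comp K.subtype x ∈
      LinearMap.ker (M11 - M11').vecMulLinear := by
    intro x
    have hx : x.1 ᵥ* Δ = 0 := LinearMap.mem_ker.mp x.2
    rw [LinearMap.mem_ker]
    show (x.1 ∘ Sum.inl) ᵥ* (M11 - M11') = 0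
    funext j
    have := gen6_sub_col1 M11 M12 M21 M22 M11' M22' x.1 j
    rw [hx] at this
    simpa using this.symm
  have hmem2 : ∀ x : ↥K, (LinearMap.funLeft F F Sum.inr).comp K.subtype x ∈
      LinearMap.ker (M22 - M22').vecMulLinear := by
    intro x
    have hx : x.1 ᵥ* Δ = 0 := LinearMap.mem_ker.mp x.2
    rw [LinearMap.mem_ker]
    show (x.1 ∘ Sum.inr) ᵥ* (M22 - M22') = 0
    funext j
    have := gen6_sub_col2 M11 M12 M21 M22 M11' M22' x.1 j
    rw [hx] at this
    simpa using this.symm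
  let ψ : ↥K →ₗ[F] ↥(LinearMap.ker (M11 - M11').vecMulLinear) ×
      ↥(LinearMap.ker (M22 - M22').vecMulLinear) :=
    LinearMap.prod
      (LinearMap.codRestrict _ ((LinearMap.funLeft F F Sum.inl).comp K.subtype) hmem1)
      (LinearMap.codRestrict _ ((LinearMap.funLeft F F Sum.inr).comp K.subtype) hmem2)
  have hψinj : Function.Injective ψ := by
    intro x y h
    have h1 : x.1 ∘ Sum.inl = y.1 ∘ Sum.inl := congrArg (fun p => (Prod.fst p).val) h
    have h2 : x.1 ∘ Sum.inr = y.1 ∘ Sum.inr := congrArg (fun p => (Prod.snd p).val) h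
    apply Subtype.ext
    funext i
    cases i with
    | inl i => exact congrFun h1 i
    | inr i => exact congrFun h2 i
  have := LinearMap.finrank_le_finrank_of_injective hψinj
  rwa [Module.finrank_prod] at this

end Gen6

/-- the two-blocks construction (Proposition 2.5): row spaces of the block
generator matrices built from rank metric codes with the stated rank-distance
restrictions form an `(n,*,d,k)` constant dimension code. -/
theorem two_blocks_construction
    (F : Type*) [Field F] [Fintype F] (d n n1 n2 a1 a2 b1 b2 k s : ℕ)
    (hd : 0 < d) (hd2 : 2 ∣ d) (hs : 0 < s)
    (hn : n1 + n2 = n) (hk : a1 + a2 = k) (hb : d / 2 ≤ b1 + b2)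
    (hn1 : k ≤ n1) (hn2 : k ≤ n2)
    (ha1 : d / 2 ≤ a1) (ha2 : d / 2 ≤ a2)
    (hb1 : 1 ≤ b1) (hb1' : b1 ≤ d / 2) (hb2 : 1 ≤ b2) (hb2' : b2 ≤ d / 2)
    (𝓜12 : Set (Matrix (Fin a1) (Fin (n2 - a2)) F))
    (𝓜21 : Set (Matrix (Fin a2) (Fin (n1 - a1)) F))
    (𝓜11 : Fin s → Set (Matrix (Fin a1) (Fin (n1 - a1)) F))
    (𝓜22 : Fin s → Set (Matrix (Fin a2) (Fin (n2 - a2)) F))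
    (h12 : ∀ M ∈ 𝓜12, ∀ M' ∈ 𝓜12, M ≠ M' → d / 2 ≤ (M - M').rank)
    (h21 : ∀ M ∈ 𝓜21, ∀ M' ∈ 𝓜21, M ≠ M' → d / 2 ≤ (M - M').rank)
    (h11 : ∀ r, ∀ M ∈ 𝓜11 r, ∀ M' ∈ 𝓜11 r, M ≠ M' → d / 2 ≤ (M - M').rank)
    (h22 : ∀ r, ∀ M ∈ 𝓜22 r, ∀ M' ∈ 𝓜22 r, M ≠ M' → d / 2 ≤ (M - M').rank)
    (h11cross : ∀ r r', r ≠ r' → ∀ M ∈ 𝓜11 r, ∀ M' ∈ 𝓜11 r',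
      M ≠ M' ∧ b1 ≤ (M - M').rank)
    (h22cross : ∀ r r', r ≠ r' → ∀ M ∈ 𝓜22 r, ∀ M' ∈ 𝓜22 r',
      M ≠ M' ∧ b2 ≤ (M - M').rank) :
    (∀ r, ∀ M11 ∈ 𝓜11 r, ∀ M22 ∈ 𝓜22 r, ∀ M12 ∈ 𝓜12, ∀ M21 ∈ 𝓜21,
      Module.finrank F ↥(rowSpace (gen6 M11 M12 M21 M22)) = k) ∧
    (∀ r r', ∀ M11 ∈ 𝓜11 r, ∀ M22 ∈ 𝓜22 r, ∀ M12 ∈ 𝓜12, ∀ M21 ∈ 𝓜21,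
      ∀ M11' ∈ 𝓜11 r', ∀ M22' ∈ 𝓜22 r', ∀ M12' ∈ 𝓜12, ∀ M21' ∈ 𝓜21,
      gen6 M11 M12 M21 M22 ≠ gen6 M11' M12' M21' M22' →
        Module.finrank F
          ↥(rowSpace (gen6 M11 M12 M21 M22) ⊓ rowSpace (gen6 M11' M12' M21' M22')) ≤
          k - d / 2) := by
  constructor
  · intro r M11 _ M22 _ M12 _ M21 _
    rw [finrank_rowSpace_gen6, hk]
  · intro r r' M11 hM11 M22 hM22 M12 hM12 M21 hM21 M11' hM11' M22' hM22' M12' hM12' M21' hM21' hne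
    have hA' := inter_le_ker M11 M12 M21 M22 M11' M12' M21' M22'
    have hker : Module.finrank F
        ↥(LinearMap.ker (gen6 M11 M12 M21 M22 - gen6 M11' M12' M21' M22').vecMulLinear)
        + (gen6 M11 M12 M21 M22 - gen6 M11' M12' M21' M22').rank = a1 + a2 := by
      simpa using finrank_ker_vecMulLinear (gen6 M11 M12 M21 M22 - gen6 M11' M12' M21' M22')
    by_cases hB : M12 = M12'
    · by_cases hC : M21 = M21'
      · subst hB; subst hC
        by_cases hrr : r = r'
        · subst hrr
          by_cases hA : M11 = M11'
          · subst hA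
            have hDne : M22 ≠ M22' := fun h => hne (by rw [h])
            have hrk : d / 2 ≤ (gen6 M11 M12 M21 M22 - gen6 M11 M12 M21 M22').rank := by
              refine le_trans (h22 r M22 hM22 M22' hM22' hDne) ?_
              rw [← gen6_sub_sub22 M11 M12 M21 M22 M11 M12 M21 M22']
              exact rank_submatrix_le' _ _ _
            omega
          · have hrk : d / 2 ≤ (gen6 M11 M12 M21 M22 - gen6 M11' M12 M21 M22').rank := by
              refine le_trans (h11 r M11 hM11 M11' hM11' hA) ?_
              rw [← gen6_sub_sub11 M11 M12 M21 M22 M11' M12 M21 M22']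
              exact rank_submatrix_le' _ _ _
            omega
        · obtain ⟨hAne, hArk⟩ := h11cross r r' hrr M11 hM11 M11' hM11'
          obtain ⟨hDne, hDrk⟩ := h22cross r r' hrr M22 hM22 M22' hM22'
          have hsplit := ker_gen6_sub_le M11 M12 M21 M22 M11' M22'
          have e1 := finrank_ker_vecMulLinear (M11 - M11')
          have e2 := finrank_ker_vecMulLinear (M22 - M22')
          simp only [Fintype.card_fin] at e1 e2
          omega
      · have hrk : d / 2 ≤ (gen6 M11 M12 M21 M22 - gen6 M11' M12' M21' M22').rank := by
          refine le_trans (h21 M21 hM21 M21' hM21' hC) ?_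
          rw [← gen6_sub_sub21 M11 M12 M21 M22 M11' M12' M21' M22']
          exact rank_submatrix_le' _ _ _
        omega
    · have hrk : d / 2 ≤ (gen6 M11 M12 M21 M22 - gen6 M11' M12' M21' M22').rank := by
        refine le_trans (h12 M12 hM12 M12' hM12' hB) ?_
        rw [← gen6_sub_sub12 M11 M12 M21 M22 M11' M12' M21' M22']
        exact rank_submatrix_le' _ _ _
      omega
end

section
/- Let F be a finite field, let d be an even positive integer, and let n = n1 + n2, k = a1 + a2 with a_i ≥ d/2 and a_i ≤ t_i ≤ n_i for i = 1,2. Let W ⊆ F^n be the row space of a k × n block matrix with row blocks of sizes a1, a2 and column blocks of sizes t1, n1−t1, t2, n2−t2 given by ( G_1, M_{1,1}, 0, M_{1,2} ; 0, M_{2,1}, G_2, M_{2,2} ), where G_1 is an a1 × t1 matrix of rank a1, G_2 is an a2 × t2 matrix of rank a2, rank(M_{1,2}) ≤ a1 − d/2 and rank(M_{2,1}) ≤ a2 − d/2. Let S1 ⊆ F^n be the subspace of vectors whose first n1 coordinates are zero and S2 the subspace of vectors whose last n2 coordinates are zero. Then dim(W ∩ S1) = a2 − rank(M_{2,1}) ≥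 d/2 and dim(W ∩ S2) = a1 − rank(M_{1,2}) ≥ d/2. Consequently, if C is any set of k-dimensional subspaces of F^n with pairwise subspace distance ≥ d such that every W' ∈ C satisfies W' ∩ S1 = 0 or W' ∩ S2 = 0, then dis(W, W') ≥ d for every W' ∈ C. -/
open Matrix

/-- The generator matrix `( G1, M11, 0, M12 ; 0, M21, G2, M22 )` with row blocks of
sizes `a1, a2` and column blocks of sizes `t1, p1, t2, p2`. -/
def gen7 {F : Type*} [Field F] {a1 a2 t1 t2 p1 p2 : ℕ}
    (G1 : Matrix (Fin a1) (Fin t1) F) (M11 : Matrix (Fin a1) (Fin p1) F)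
    (M12 : Matrix (Fin a1) (Fin p2) F) (M21 : Matrix (Fin a2) (Fin p1) F)
    (G2 : Matrix (Fin a2) (Fin t2) F) (M22 : Matrix (Fin a2) (Fin p2) F) :
    Matrix (Fin a1 ⊕ Fin a2) ((Fin t1 ⊕ Fin p1) ⊕ (Fin t2 ⊕ Fin p2)) F :=
  Matrix.fromBlocks (Matrix.fromCols G1 M11) (Matrix.fromCols 0 M12)
    (Matrix.fromCols 0 M21) (Matrix.fromCols G2 M22)

/-- `S1`: the subspace of vectors whose first `n1 = t1 + p1` coordinates are zero. -/
noncomputable def S1 (F : Type*) [Field F] (t1 p1 t2 p2 : ℕ) :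
    Submodule F ((Fin t1 ⊕ Fin p1) ⊕ (Fin t2 ⊕ Fin p2) → F) :=
  LinearMap.ker (LinearMap.funLeft F F
    (Sum.inl : Fin t1 ⊕ Fin p1 → (Fin t1 ⊕ Fin p1) ⊕ (Fin t2 ⊕ Fin p2)))

/-- `S2`: the subspace of vectors whose last `n2 = t2 + p2` coordinates are zero. -/
noncomputable def S2 (F : Type*) [Field F] (t1 p1 t2 p2 : ℕ) :
    Submodule F ((Fin t1 ⊕ Fin p1) ⊕ (Fin t2 ⊕ Fin p2) → F) :=
  LinearMap.ker (LinearMap.funLeft F F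
    (Sum.inr : Fin t2 ⊕ Fin p2 → (Fin t1 ⊕ Fin p1) ⊕ (Fin t2 ⊕ Fin p2)))

section Aux

variable {F : Type*} [Field F]

/-- Rank–nullity for `vecMulLinear`. -/
lemma rank_nullity_vecMul {a p : ℕ} (M : Matrix (Fin a) (Fin p) F) :
    Module.finrank F ↥(LinearMap.ker M.vecMulLinear) + M.rank = a := by
  have h := LinearMap.finrank_range_add_finrank_ker M.vecMulLinear
  have hr : Module.finrank F ↥(LinearMap.range M.vecMulLinear) = M.rank := by
    rw [← Matrix.mulVecLin_transpose, ← Matrix.rank_transpose M]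
    rfl
  rw [hr] at h
  simpa [Module.finrank_pi, add_comm] using h

lemma vecMul_inj_of_rank {a p : ℕ} (M : Matrix (Fin a) (Fin p) F) (h : M.rank = a) :
    Function.Injective M.vecMulLinear := by
  rw [← LinearMap.ker_eq_bot]
  have h1 := rank_nullity_vecMul M
  rw [h] at h1
  have h0 : Module.finrank F ↥(LinearMap.ker M.vecMulLinear) = 0 := by omega
  exact Submodule.finrank_eq_zero.mp h0

end Aux

/-- Extend a vector by zero on the right summand. -/
def elimZeroR (F : Type*) [Semiring F] (α β : Type*) : (α → F) →ₗ[F] (α ⊕ β → F) where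
  toFun u := Sum.elim u 0
  map_add' x y := by funext i; cases i <;> simp
  map_smul' c x := by funext i; cases i <;> simp

/-- Extend a vector by zero on the left summand. -/
def elimZeroL (F : Type*) [Semiring F] (α β : Type*) : (β → F) →ₗ[F] (α ⊕ β → F) where
  toFun v := Sum.elim 0 v
  map_add' x y := by funext i; cases i <;> simp
  map_smul' c x := by funext i; cases i <;> simp

@[simp] lemma elimZeroR_apply {F α β : Type*} [Semiring F] (u : α → F) :
    elimZeroR F α β u = Sum.elim u 0 := rfl

@[simp] lemma elimZeroL_apply {F α β : Type*} [Semiring F] (v : β → F) :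
    elimZeroL F α β v = Sum.elim (0 : α → F) v := rfl

section Aux2

variable {F : Type*} [Field F]

lemma gen7_vecMul {a1 a2 t1 t2 p1 p2 : ℕ}
    (G1 : Matrix (Fin a1) (Fin t1) F) (M11 : Matrix (Fin a1) (Fin p1) F)
    (M12 : Matrix (Fin a1) (Fin p2) F) (M21 : Matrix (Fin a2) (Fin p1) F)
    (G2 : Matrix (Fin a2) (Fin t2) F) (M22 : Matrix (Fin a2) (Fin p2) F)
    (u : Fin a1 → F) (v : Fin a2 → F) :
    Sum.elim u v ᵥ* gen7 G1 M11 M12 M21 G2 M22 =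
      Sum.elim (Sum.elim (u ᵥ* G1) (u ᵥ* M11 + v ᵥ* M21))
        (Sum.elim (v ᵥ* G2) (u ᵥ* M12 + v ᵥ* M22)) := by
  funext x
  rcases x with (i | i) <;> rcases i with (j | j) <;>
    simp [gen7, Matrix.vecMul_fromBlocks, Matrix.vecMul_fromCols]

end Aux2

/-- a codeword of the multi-blocks construction with rank-restricted
off-diagonal blocks meets `S1` in dimension `a2 - rank M21 ≥ d/2` and `S2` in dimension
`a1 - rank M12 ≥ d/2`; consequently it is at subspace distance at least `d` from every
member of a CDC of minimum distance `d` all of whose members meet `S1` or `S2`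
trivially. -/
theorem multi_blocks_codeword_inserting
    (F : Type*) [Field F] [Fintype F] (d n1 n2 a1 a2 t1 t2 p1 p2 k : ℕ)
    (hd : 0 < d) (hd2 : 2 ∣ d)
    (hn1 : n1 = t1 + p1) (hn2 : n2 = t2 + p2) (hk : a1 + a2 = k)
    (ha1 : d / 2 ≤ a1) (ha2 : d / 2 ≤ a2)
    (ht1 : a1 ≤ t1) (ht2 : a2 ≤ t2)
    (G1 : Matrix (Fin a1) (Fin t1) F) (M11 : Matrix (Fin a1) (Fin p1) F)
    (M12 : Matrix (Fin a1) (Fin p2) F) (M21 : Matrix (Fin a2) (Fin p1) F)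
    (G2 : Matrix (Fin a2) (Fin t2) F) (M22 : Matrix (Fin a2) (Fin p2) F)
    (hG1 : G1.rank = a1) (hG2 : G2.rank = a2)
    (hM12 : M12.rank ≤ a1 - d / 2) (hM21 : M21.rank ≤ a2 - d / 2) :
    let W := rowSpace (gen7 G1 M11 M12 M21 G2 M22)
    (Module.finrank F ↥(W ⊓ S1 F t1 p1 t2 p2) = a2 - M21.rank) ∧
    (d / 2 ≤ Module.finrank F ↥(W ⊓ S1 F t1 p1 t2 p2)) ∧
    (Module.finrank F ↥(W ⊓ S2 F t1 p1 t2 p2) = a1 - M12.rank) ∧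
    (d / 2 ≤ Module.finrank F ↥(W ⊓ S2 F t1 p1 t2 p2)) ∧
    (∀ C : Set (Submodule F ((Fin t1 ⊕ Fin p1) ⊕ (Fin t2 ⊕ Fin p2) → F)),
      (∀ W' ∈ C, Module.finrank F ↥W' = k) →
      (∀ W' ∈ C, ∀ W'' ∈ C, W' ≠ W'' →
        d ≤ 2 * k - 2 * Module.finrank F ↥(W' ⊓ W'')) →
      (∀ W' ∈ C, W' ⊓ S1 F t1 p1 t2 p2 = ⊥ ∨ W' ⊓ S2 F t1 p1 t2 p2 = ⊥) →
      ∀ W' ∈ C, d ≤ 2 * k - 2 * Module.finrank F ↥(W ⊓ W')) := by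
  intro W
  set M : Matrix (Fin a1 ⊕ Fin a2) ((Fin t1 ⊕ Fin p1) ⊕ (Fin t2 ⊕ Fin p2)) F :=
    gen7 G1 M11 M12 M21 G2 M22 with hM
  have hG1inj := vecMul_inj_of_rank G1 hG1
  have hG2inj := vecMul_inj_of_rank G2 hG2
  -- dimension of W ⊓ S1
  have key1 : Module.finrank F ↥(W ⊓ S1 F t1 p1 t2 p2) =
      Module.finrank F ↥(LinearMap.ker M21.vecMulLinear) := by
    set ψ : ↥(LinearMap.ker M21.vecMulLinear) →ₗ[F] ((Fin t1 ⊕ Fin p1) ⊕ (Fin t2 ⊕ Fin p2) → F) :=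
      M.vecMulLinear ∘ₗ elimZeroL F (Fin a1) (Fin a2) ∘ₗ
        (LinearMap.ker M21.vecMulLinear).subtype with hψ
    have hψapp : ∀ v : ↥(LinearMap.ker M21.vecMulLinear),
        ψ v = Sum.elim 0 (v : Fin a2 → F) ᵥ* M := fun v => rfl
    have hinj : Function.Injective ψ := by
      intro x y hxy
      rw [hψapp, hψapp, hM, gen7_vecMul, gen7_vecMul] at hxy
      have h2 : (x : Fin a2 → F) ᵥ* G2 = (y : Fin a2 → F) ᵥ* G2 := by
        funext j
        exact congrFun hxy (Sum.inr (Sum.inl j))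
      exact Subtype.ext (hG2inj h2)
    have hrange : LinearMap.range ψ = W ⊓ S1 F t1 p1 t2 p2 := by
      ext x
      constructor
      · rintro ⟨⟨v, hv⟩, rfl⟩
        rw [LinearMap.mem_ker] at hv
        simp only [Matrix.vecMulLinear_apply] at hv
        constructor
        · exact ⟨Sum.elim 0 v, rfl⟩
        · simp only [S1, LinearMap.mem_ker]
          funext i
          rw [hψapp]
          simp only [hM, gen7_vecMul, LinearMap.funLeft_apply]
          rcases i with (j | j) <;> simp [hv]
      · rintro ⟨⟨w, rfl⟩, hS⟩
        have hw : w = Sum.elim (w ∘ Sum.inl) (w ∘ Sum.inr) := by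
          funext i; cases i <;> rfl
        simp only [S1, LinearMap.mem_ker, Matrix.vecMulLinear_apply] at hS
        rw [hw, gen7_vecMul] at hS
        have hG1z : (w ∘ Sum.inl) ᵥ* G1 = 0 := by
          funext j
          have := congrFun hS (Sum.inl j)
          simpa using this
        have hu0 : w ∘ Sum.inl = 0 := by
          apply hG1inj
          simpa using hG1z
        have hker : (w ∘ Sum.inr) ᵥ* M21 = 0 := by
          funext j
          have := congrFun hS (Sum.inr j)
          simpa [hu0] using this
        refine ⟨⟨w ∘ Sum.inr, by simpa [LinearMap.mem_ker] using hker⟩, ?_⟩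
        have heq : Sum.elim (0 : Fin a1 → F) (w ∘ Sum.inr) ᵥ* gen7 G1 M11 M12 M21 G2 M22
            = w ᵥ* gen7 G1 M11 M12 M21 G2 M22 := by
          conv_rhs => rw [hw]
          rw [gen7_vecMul, gen7_vecMul]
          simp [hu0]
        exact heq
    rw [← hrange]
    exact (LinearEquiv.finrank_eq (LinearEquiv.ofInjective ψ hinj)).symm
  -- dimension of W ⊓ S2
  have key2 : Module.finrank F ↥(W ⊓ S2 F t1 p1 t2 p2) =
      Module.finrank F ↥(LinearMap.ker M12.vecMulLinear) := by
    set ψ : ↥(LinearMap.ker M12.vecMulLinear) →ₗ[F] ((Fin t1 ⊕ Fin p1) ⊕ (Fin t2 ⊕ Fin p2) → F) :=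
      M.vecMulLinear ∘ₗ elimZeroR F (Fin a1) (Fin a2) ∘ₗ
        (LinearMap.ker M12.vecMulLinear).subtype with hψ
    have hψapp : ∀ u : ↥(LinearMap.ker M12.vecMulLinear),
        ψ u = Sum.elim (u : Fin a1 → F) 0 ᵥ* M := fun u => rfl
    have hinj : Function.Injective ψ := by
      intro x y hxy
      rw [hψapp, hψapp, hM, gen7_vecMul, gen7_vecMul] at hxy
      have h2 : (x : Fin a1 → F) ᵥ* G1 = (y : Fin a1 → F) ᵥ* G1 := by
        funext j
        exact congrFun hxy (Sum.inl (Sum.inl j))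
      exact Subtype.ext (hG1inj h2)
    have hrange : LinearMap.range ψ = W ⊓ S2 F t1 p1 t2 p2 := by
      ext x
      constructor
      · rintro ⟨⟨u, hu⟩, rfl⟩
        rw [LinearMap.mem_ker] at hu
        simp only [Matrix.vecMulLinear_apply] at hu
        constructor
        · exact ⟨Sum.elim u 0, rfl⟩
        · simp only [S2, LinearMap.mem_ker]
          funext i
          rw [hψapp]
          simp only [hM, gen7_vecMul, LinearMap.funLeft_apply]
          rcases i with (j | j) <;> simp [hu]
      · rintro ⟨⟨w, rfl⟩, hS⟩
        have hw : w = Sum.elim (w ∘ Sum.inl) (w ∘ Sum.inr) := by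
          funext i; cases i <;> rfl
        simp only [S2, LinearMap.mem_ker, Matrix.vecMulLinear_apply] at hS
        rw [hw, gen7_vecMul] at hS
        have hG2z : (w ∘ Sum.inr) ᵥ* G2 = 0 := by
          funext j
          have := congrFun hS (Sum.inl j)
          simpa using this
        have hv0 : w ∘ Sum.inr = 0 := by
          apply hG2inj
          simpa using hG2z
        have hker : (w ∘ Sum.inl) ᵥ* M12 = 0 := by
          funext j
          have := congrFun hS (Sum.inr j)
          simpa [hv0] using this
        refine ⟨⟨w ∘ Sum.inl, by simpa [LinearMap.mem_ker] using hker⟩, ?_⟩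
        have heq : Sum.elim (w ∘ Sum.inl) (0 : Fin a2 → F) ᵥ* gen7 G1 M11 M12 M21 G2 M22
            = w ᵥ* gen7 G1 M11 M12 M21 G2 M22 := by
          conv_rhs => rw [hw]
          rw [gen7_vecMul, gen7_vecMul]
          simp [hv0]
        exact heq
    rw [← hrange]
    exact (LinearEquiv.finrank_eq (LinearEquiv.ofInjective ψ hinj)).symm
  have h1add : Module.finrank F ↥(W ⊓ S1 F t1 p1 t2 p2) + M21.rank = a2 := by
    rw [key1]; exact rank_nullity_vecMul M21
  have h2add : Module.finrank F ↥(W ⊓ S2 F t1 p1 t2 p2) + M12.rank = a1 := by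
    rw [key2]; exact rank_nullity_vecMul M12
  have hS1d : d / 2 ≤ Module.finrank F ↥(W ⊓ S1 F t1 p1 t2 p2) := by omega
  have hS2d : d / 2 ≤ Module.finrank F ↥(W ⊓ S2 F t1 p1 t2 p2) := by omega
  refine ⟨by omega, hS1d, by omega, hS2d, ?_⟩
  intro C hdim hdist hmeet W' hW'
  have hWfin : Module.finrank F ↥W ≤ k := by
    have h := M.vecMulLinear.finrank_range_le
    simp only [Module.finrank_pi, Fintype.card_sum, Fintype.card_fin] at h
    have h2 : Module.finrank F ↥W ≤ a1 + a2 := h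
    omega
  have hfin : ∀ S : Submodule F ((Fin t1 ⊕ Fin p1) ⊕ (Fin t2 ⊕ Fin p2) → F),
      W ⊓ W' ⊓ (W ⊓ S) = ⊥ → d / 2 ≤ Module.finrank F ↥(W ⊓ S) →
      d ≤ 2 * k - 2 * Module.finrank F ↥(W ⊓ W') := by
    intro S hbot hdS
    have hsum := Submodule.finrank_sup_add_finrank_inf_eq (W ⊓ W') (W ⊓ S)
    rw [hbot, finrank_bot] at hsum
    have hle : Module.finrank F ↥(W ⊓ W' ⊔ W ⊓ S) ≤ Module.finrank F ↥W :=
      Submodule.finrank_mono (sup_le inf_le_left inf_le_left)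
    omega
  rcases hmeet W' hW' with h | h
  · refine hfin (S1 F t1 p1 t2 p2) ?_ hS1d
    rw [← le_bot_iff, ← h]
    exact le_inf (inf_le_left.trans inf_le_right) (inf_le_right.trans inf_le_right)
  · refine hfin (S2 F t1 p1 t2 p2) ?_ hS2d
    rw [← le_bot_iff, ← h]
    exact le_inf (inf_le_left.trans inf_le_right) (inf_le_right.trans inf_le_right)
end

section
/- Let F be a finite field, let d be an even positive integer, and let n = n1 + n2, k = a1 + a2 with a_i ≥ d/2 and a_i ≤ t_i ≤ n_i − a_i for i = 1,2. Let B ⊆ F^n be the row space of a k × n block matrix (row blocks a1, a2; column blocks t1, n1−t1, t2, n2−t2) of the form ( G_{B,1}, M_{1,1}, 0, M_{1,2} ; 0, M_{2,1}, G_{B,2}, M_{2,2} ) where G_{B,i} is an a_i × t_i matrix of rank a_i, and let E ⊆ F^n be the row space of a k × n block matrix of the form ( M_1, G_1, 0, 0 ; 0, 0, M_2, G_2 ) (same block sizes) where G_i is an a_i × (n_i − t_i) matrix of rank a_i and rank(M_i) ≤ c_i for i = 1,2. If c1 + c2 ≤ k − d/2, then dim(B ∩ E) ≤ c1 + c2 ≤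 k − d/2, so dis(B, E) ≥ d. Moreover, with S1 the subspace of F^n of vectors whose first n1 coordinates are zero and S2 the subspace of vectors whose last n2 coordinates are zero, dim(E ∩ S1) = a2 ≥ d/2 and dim(E ∩ S2) = a1 ≥ d/2. -/
open Matrix

/-- The generator matrix `( G1, M11, 0, M12 ; 0, M21, G2, M22 )` with row blocks of
sizes `a1, a2` and column blocks of sizes `t1, p1, t2, p2`. -/
def genB {F : Type*} [Field F] {a1 a2 t1 t2 p1 p2 : ℕ}
    (G1 : Matrix (Fin a1) (Fin t1) F) (M11 : Matrix (Fin a1) (Fin p1) F)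
    (M12 : Matrix (Fin a1) (Fin p2) F) (M21 : Matrix (Fin a2) (Fin p1) F)
    (G2 : Matrix (Fin a2) (Fin t2) F) (M22 : Matrix (Fin a2) (Fin p2) F) :
    Matrix (Fin a1 ⊕ Fin a2) ((Fin t1 ⊕ Fin p1) ⊕ (Fin t2 ⊕ Fin p2)) F :=
  Matrix.fromBlocks (Matrix.fromCols G1 M11) (Matrix.fromCols 0 M12)
    (Matrix.fromCols 0 M21) (Matrix.fromCols G2 M22)

/-- The generator matrix `( M1, G1, 0, 0 ; 0, 0, M2, G2 )` with row blocks of sizes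
`a1, a2` and column blocks of sizes `t1, p1, t2, p2`. -/
def genE {F : Type*} [Field F] {a1 a2 t1 t2 p1 p2 : ℕ}
    (M1 : Matrix (Fin a1) (Fin t1) F) (G1 : Matrix (Fin a1) (Fin p1) F)
    (M2 : Matrix (Fin a2) (Fin t2) F) (G2 : Matrix (Fin a2) (Fin p2) F) :
    Matrix (Fin a1 ⊕ Fin a2) ((Fin t1 ⊕ Fin p1) ⊕ (Fin t2 ⊕ Fin p2)) F :=
  Matrix.fromBlocks (Matrix.fromCols M1 G1) 0 0 (Matrix.fromCols M2 G2)

section AuxLemmas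
variable {F : Type*} [Field F]

lemma aux_vecMul_eq_zero {a n : ℕ} {M : Matrix (Fin a) (Fin n) F} (h : M.rank = a)
    {y : Fin a → F} (hy : Matrix.vecMul y M = 0) : y = 0 := by
  have hinj : Function.Injective M.vecMulLinear := by
    rw [Matrix.coe_vecMulLinear, Matrix.vecMul_injective_iff]
    rw [linearIndependent_iff_card_eq_finrank_span]
    rw [Set.finrank, ← Matrix.rank_eq_finrank_span_row, h, Fintype.card_fin]
  apply hinj
  simpa using hy

lemma aux_finrank_rowSpace {a n : ℕ} (M : Matrix (Fin a) (Fin n) F) :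
    Module.finrank F (rowSpace M) = M.rank := by
  rw [rowSpace, range_vecMulLinear, Matrix.rank_eq_finrank_span_row]

lemma aux_finrank_map_eq {V W : Type*} [AddCommGroup V] [Module F V]
    [AddCommGroup W] [Module F W] [FiniteDimensional F V]
    (f : V →ₗ[F] W) (K : Submodule F V)
    (h : ∀ x ∈ K, f x = 0 → x = 0) :
    Module.finrank F (K.map f) = Module.finrank F K := by
  have hker : LinearMap.ker (f ∘ₗ K.subtype) = ⊥ := by
    rw [LinearMap.ker_eq_bot']
    rintro ⟨x, hx⟩ hfx
    exact Subtype.ext (h x hx (by simpa using hfx))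
  have h2 := LinearMap.finrank_range_add_finrank_ker (f ∘ₗ K.subtype)
  rw [hker, finrank_bot, add_zero, LinearMap.range_comp, Submodule.range_subtype] at h2
  exact h2

lemma aux_finrank_ker_funLeft_inl {a1 a2 : ℕ} :
    Module.finrank F (LinearMap.ker (LinearMap.funLeft F F
      (Sum.inl : Fin a1 → Fin a1 ⊕ Fin a2))) = a2 := by
  have hsurj : Function.Surjective (LinearMap.funLeft F F
      (Sum.inl : Fin a1 → Fin a1 ⊕ Fin a2)) :=
    LinearMap.funLeft_surjective_of_injective F F _ Sum.inl_injective
  have h2 := LinearMap.finrank_range_add_finrank_ker (LinearMap.funLeft F F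
      (Sum.inl : Fin a1 → Fin a1 ⊕ Fin a2))
  rw [LinearMap.range_eq_top.mpr hsurj, finrank_top] at h2
  simp [Module.finrank_fintype_fun_eq_card] at h2
  omega

lemma aux_finrank_ker_funLeft_inr {a1 a2 : ℕ} :
    Module.finrank F (LinearMap.ker (LinearMap.funLeft F F
      (Sum.inr : Fin a2 → Fin a1 ⊕ Fin a2))) = a1 := by
  have hsurj : Function.Surjective (LinearMap.funLeft F F
      (Sum.inr : Fin a2 → Fin a1 ⊕ Fin a2)) :=
    LinearMap.funLeft_surjective_of_injective F F _ Sum.inr_injective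
  have h2 := LinearMap.finrank_range_add_finrank_ker (LinearMap.funLeft F F
      (Sum.inr : Fin a2 → Fin a1 ⊕ Fin a2))
  rw [LinearMap.range_eq_top.mpr hsurj, finrank_top] at h2
  simp [Module.finrank_fintype_fun_eq_card] at h2
  omega

end AuxLemmas

/-- a multi-blocks codeword `B` and a parallel-blocks codeword `E` with
rank-restricted blocks satisfy `dim(B ∩ E) ≤ c1 + c2 ≤ k - d/2`, hence `dis(B,E) ≥ d`;
moreover `dim(E ∩ S1) = a2 ≥ d/2` and `dim(E ∩ S2) = a1 ≥ d/2`. -/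
theorem blocks_vs_parallel_blocks_distance
    (F : Type*) [Field F] [Fintype F] (d n1 n2 a1 a2 t1 t2 c1 c2 k : ℕ)
    (hd : 0 < d) (hd2 : 2 ∣ d)
    (hn1 : n1 = t1 + (n1 - t1)) (hn2 : n2 = t2 + (n2 - t2)) (hk : a1 + a2 = k)
    (ha1 : d / 2 ≤ a1) (ha2 : d / 2 ≤ a2)
    (ht1 : a1 ≤ t1) (ht1' : t1 ≤ n1 - a1) (ht2 : a2 ≤ t2) (ht2' : t2 ≤ n2 - a2)
    (hc : c1 + c2 ≤ k - d / 2)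
    (GB1 : Matrix (Fin a1) (Fin t1) F) (M11 : Matrix (Fin a1) (Fin (n1 - t1)) F)
    (M12 : Matrix (Fin a1) (Fin (n2 - t2)) F) (M21 : Matrix (Fin a2) (Fin (n1 - t1)) F)
    (GB2 : Matrix (Fin a2) (Fin t2) F) (M22 : Matrix (Fin a2) (Fin (n2 - t2)) F)
    (hGB1 : GB1.rank = a1) (hGB2 : GB2.rank = a2)
    (M1 : Matrix (Fin a1) (Fin t1) F) (G1 : Matrix (Fin a1) (Fin (n1 - t1)) F)
    (M2 : Matrix (Fin a2) (Fin t2) F) (G2 : Matrix (Fin a2) (Fin (n2 - t2)) F)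
    (hG1 : G1.rank = a1) (hG2 : G2.rank = a2)
    (hM1 : M1.rank ≤ c1) (hM2 : M2.rank ≤ c2) :
    let B := rowSpace (genB GB1 M11 M12 M21 GB2 M22)
    let E := rowSpace (genE M1 G1 M2 G2)
    (Module.finrank F ↥(B ⊓ E) ≤ c1 + c2) ∧
    (Module.finrank F ↥(B ⊓ E) ≤ k - d / 2) ∧
    (d ≤ 2 * k - 2 * Module.finrank F ↥(B ⊓ E)) ∧
    (Module.finrank F ↥(E ⊓ S1 F t1 (n1 - t1) t2 (n2 - t2)) = a2) ∧
    (Module.finrank F ↥(E ⊓ S2 F t1 (n1 - t1) t2 (n2 - t2)) = a1) := by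
  intro B E
  classical
  -- projections onto the t1-block and the t2-block of coordinates
  set π1 : (((Fin t1 ⊕ Fin (n1 - t1)) ⊕ (Fin t2 ⊕ Fin (n2 - t2))) → F) →ₗ[F] (Fin t1 → F) :=
    LinearMap.funLeft F F (fun i : Fin t1 => Sum.inl (Sum.inl i)) with hπ1
  set π2 : (((Fin t1 ⊕ Fin (n1 - t1)) ⊕ (Fin t2 ⊕ Fin (n2 - t2))) → F) →ₗ[F] (Fin t2 → F) :=
    LinearMap.funLeft F F (fun i : Fin t2 => Sum.inr (Sum.inl i)) with hπ2
  have hmem1 : ∀ v ∈ B ⊓ E, π1 v ∈ rowSpace M1 := by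
    rintro v ⟨-, hvE⟩
    obtain ⟨x, rfl⟩ := hvE
    refine ⟨x ∘ Sum.inl, ?_⟩
    funext j
    simp [hπ1, genE, Matrix.vecMul_fromBlocks, Matrix.vecMul_fromCols,
      Matrix.vecMul_zero, LinearMap.funLeft]
  have hmem2 : ∀ v ∈ B ⊓ E, π2 v ∈ rowSpace M2 := by
    rintro v ⟨-, hvE⟩
    obtain ⟨x, rfl⟩ := hvE
    refine ⟨x ∘ Sum.inr, ?_⟩
    funext j
    simp [hπ2, genE, Matrix.vecMul_fromBlocks, Matrix.vecMul_fromCols,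
      Matrix.vecMul_zero, LinearMap.funLeft]
  have hinjB : ∀ v ∈ B, π1 v = 0 → π2 v = 0 → v = 0 := by
    rintro v hvB h1 h2
    obtain ⟨y, rfl⟩ := hvB
    have hy1 : Matrix.vecMul (y ∘ Sum.inl) GB1 = 0 := by
      funext j
      have := congrFun h1 j
      simpa [hπ1, genB, Matrix.vecMul_fromBlocks, Matrix.vecMul_fromCols,
        Matrix.vecMul_zero, LinearMap.funLeft] using this
    have hy2 : Matrix.vecMul (y ∘ Sum.inr) GB2 = 0 := by
      funext j
      have := congrFun h2 j
      simpa [hπ2, genB, Matrix.vecMul_fromBlocks, Matrix.vecMul_fromCols,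
        Matrix.vecMul_zero, LinearMap.funLeft] using this
    have hz1 := aux_vecMul_eq_zero hGB1 hy1
    have hz2 := aux_vecMul_eq_zero hGB2 hy2
    have hy : y = 0 := by
      funext i
      cases i with
      | inl i => exact congrFun hz1 i
      | inr i => exact congrFun hz2 i
    rw [hy, map_zero]
  -- Part 1
  have part1 : Module.finrank F ↥(B ⊓ E) ≤ c1 + c2 := by
    let f : ↥(B ⊓ E) →ₗ[F] ↥(rowSpace M1) × ↥(rowSpace M2) :=
      LinearMap.prod
        ((π1 ∘ₗ (B ⊓ E).subtype).codRestrict (rowSpace M1) (fun v => hmem1 v v.2))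
        ((π2 ∘ₗ (B ⊓ E).subtype).codRestrict (rowSpace M2) (fun v => hmem2 v v.2))
    have hf : Function.Injective f := by
      rw [← LinearMap.ker_eq_bot, LinearMap.ker_eq_bot']
      rintro ⟨v, hv⟩ h0
      have h01 : π1 v = 0 := by
        have := congrArg (fun z => (z.1 : Fin t1 → F)) h0
        exact this
      have h02 : π2 v = 0 := by
        have := congrArg (fun z => (z.2 : Fin t2 → F)) h0
        exact this
      exact Subtype.ext (hinjB v hv.1 h01 h02)
    calc Module.finrank F ↥(B ⊓ E)
        ≤ Module.finrank F (↥(rowSpace M1) × ↥(rowSpace M2)) :=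
          LinearMap.finrank_le_finrank_of_injective hf
      _ = M1.rank + M2.rank := by
          rw [Module.finrank_prod, aux_finrank_rowSpace, aux_finrank_rowSpace]
      _ ≤ c1 + c2 := add_le_add hM1 hM2
  have part2 : Module.finrank F ↥(B ⊓ E) ≤ k - d / 2 := le_trans part1 hc
  refine ⟨part1, part2, ?_, ?_, ?_⟩
  · omega
  · -- dim (E ⊓ S1) = a2
    have hES1 : E ⊓ S1 F t1 (n1 - t1) t2 (n2 - t2) =
        Submodule.map (genE M1 G1 M2 G2).vecMulLinear
          (LinearMap.ker (LinearMap.funLeft F F (Sum.inl : Fin a1 → Fin a1 ⊕ Fin a2))) := by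
      ext v
      constructor
      · rintro ⟨hvE, hvS⟩
        obtain ⟨y, rfl⟩ := hvE
        refine ⟨y, ?_, rfl⟩
        have hvS' := LinearMap.mem_ker.mp hvS
        have hG1z : Matrix.vecMul (y ∘ Sum.inl) G1 = 0 := by
          funext j
          have := congrFun hvS' (Sum.inr j)
          simpa [S1, genE, Matrix.vecMul_fromBlocks, Matrix.vecMul_fromCols,
            Matrix.vecMul_zero, LinearMap.funLeft] using this
        have hz := aux_vecMul_eq_zero hG1 hG1z
        simp only [SetLike.mem_coe, LinearMap.mem_ker]
        funext i
        exact congrFun hz i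
      · rintro ⟨y, hy, rfl⟩
        have hy' : y ∘ Sum.inl = 0 := by
          funext i
          exact congrFun (LinearMap.mem_ker.mp hy) i
        refine ⟨⟨y, rfl⟩, ?_⟩
        simp only [S1, SetLike.mem_coe, LinearMap.mem_ker]
        funext j
        cases j with
        | inl j =>
          simp [genE, Matrix.vecMul_fromBlocks, Matrix.vecMul_fromCols,
            Matrix.vecMul_zero, LinearMap.funLeft, hy', Matrix.zero_vecMul]
        | inr j =>
          simp [genE, Matrix.vecMul_fromBlocks, Matrix.vecMul_fromCols,
            Matrix.vecMul_zero, LinearMap.funLeft, hy', Matrix.zero_vecMul]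
    rw [hES1, aux_finrank_map_eq, aux_finrank_ker_funLeft_inl]
    intro y hy h0
    have hy' : y ∘ Sum.inl = 0 := by
      funext i
      exact congrFun (LinearMap.mem_ker.mp hy) i
    have hG2z : Matrix.vecMul (y ∘ Sum.inr) G2 = 0 := by
      funext j
      have := congrFun h0 (Sum.inr (Sum.inr j))
      simpa [genE, Matrix.vecMul_fromBlocks, Matrix.vecMul_fromCols,
        Matrix.vecMul_zero] using this
    have hz := aux_vecMul_eq_zero hG2 hG2z
    funext i
    cases i with
    | inl i => exact congrFun hy' i
    | inr i => exact congrFun hz i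
  · -- dim (E ⊓ S2) = a1
    have hES2 : E ⊓ S2 F t1 (n1 - t1) t2 (n2 - t2) =
        Submodule.map (genE M1 G1 M2 G2).vecMulLinear
          (LinearMap.ker (LinearMap.funLeft F F (Sum.inr : Fin a2 → Fin a1 ⊕ Fin a2))) := by
      ext v
      constructor
      · rintro ⟨hvE, hvS⟩
        obtain ⟨y, rfl⟩ := hvE
        refine ⟨y, ?_, rfl⟩
        have hvS' := LinearMap.mem_ker.mp hvS
        have hG2z : Matrix.vecMul (y ∘ Sum.inr) G2 = 0 := by
          funext j
          have := congrFun hvS' (Sum.inr j)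
          simpa [S2, genE, Matrix.vecMul_fromBlocks, Matrix.vecMul_fromCols,
            Matrix.vecMul_zero, LinearMap.funLeft] using this
        have hz := aux_vecMul_eq_zero hG2 hG2z
        simp only [SetLike.mem_coe, LinearMap.mem_ker]
        funext i
        exact congrFun hz i
      · rintro ⟨y, hy, rfl⟩
        have hy' : y ∘ Sum.inr = 0 := by
          funext i
          exact congrFun (LinearMap.mem_ker.mp hy) i
        refine ⟨⟨y, rfl⟩, ?_⟩
        simp only [S2, SetLike.mem_coe, LinearMap.mem_ker]
        funext j
        cases j with
        | inl j =>
          simp [genE, Matrix.vecMul_fromBlocks, Matrix.vecMul_fromCols,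
            Matrix.vecMul_zero, LinearMap.funLeft, hy', Matrix.zero_vecMul]
        | inr j =>
          simp [genE, Matrix.vecMul_fromBlocks, Matrix.vecMul_fromCols,
            Matrix.vecMul_zero, LinearMap.funLeft, hy', Matrix.zero_vecMul]
    rw [hES2, aux_finrank_map_eq, aux_finrank_ker_funLeft_inr]
    intro y hy h0
    have hy' : y ∘ Sum.inr = 0 := by
      funext i
      exact congrFun (LinearMap.mem_ker.mp hy) i
    have hG1z : Matrix.vecMul (y ∘ Sum.inl) G1 = 0 := by
      funext j
      have := congrFun h0 (Sum.inl (Sum.inr j))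
      simpa [genE, Matrix.vecMul_fromBlocks, Matrix.vecMul_fromCols,
        Matrix.vecMul_zero] using this
    have hz := aux_vecMul_eq_zero hG1 hG1z
    funext i
    cases i with
    | inl i => exact congrFun hz i
    | inr i => exact congrFun hy' i
end

section
/- Let F be a finite field and u1, u2, p, m, b1, b2, d_f, s positive integers with b1 + b2 ≥ d_f. For r = 1,…,s let M_1^r be u1 × p matrices and M_2^r be u2 × m matrices over F such that for all r ≠ r': M_1^r ≠ M_1^{r'}, M_2^r ≠ M_2^{r'}, rank(M_1^r − M_1^{r'}) ≥ b1 and rank(M_2^r − M_2^{r'}) ≥ b2. Let M_3 be a set of u1 × m matrices with rank(A − B) ≥ d_f for all distinct A, B ∈ M_3. Then the set M of (u1+u2) × (p+m) block matrices ( M_1^r, M_3 ; 0, M_2^r ), for 1 ≤ r ≤ s and M_3 ∈ M_3, has cardinality s·|M_3| and minimum rank distance ≥ d_f, i.e. rank(X − Y) ≥ d_f for all distinct X, Y ∈ M. -/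
set_option linter.unusedSectionVars false
set_option synthInstance.maxHeartbeats 1000000
set_option maxHeartbeats 1000000

open Matrix Module

section Aux
variable {F : Type*} [Field F] {m1 m2 n1 n2 : Type*}
  [Fintype m1] [Fintype m2] [Fintype n1] [Fintype n2]

/-- extension by zero into the left factor -/
noncomputable def extL : (m1 → F) →ₗ[F] ((m1 ⊕ m2) → F) where
  toFun x := Sum.elim x 0
  map_add' x y := by funext i; cases i <;> simp
  map_smul' c x := by funext i; cases i <;> simp

lemma extL_injective : Function.Injective (extL (F := F) (m1 := m1) (m2 := m2)) := by
  intro x y h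
  funext i
  have := congrFun h (Sum.inl i)
  simpa [extL] using this

lemma rank_fromBlocks_ge (A : Matrix m1 n1 F) (B : Matrix m1 n2 F) (D : Matrix m2 n2 F) :
    A.rank + D.rank ≤ (fromBlocks A B 0 D).rank := by
  classical
  set N := fromBlocks A B 0 D with hN
  set W := LinearMap.range N.mulVecLin with hW
  let π : ((m1 ⊕ m2) → F) →ₗ[F] (m2 → F) := LinearMap.funLeft F F Sum.inr
  let g : W →ₗ[F] (m2 → F) := π.comp W.subtype
  have hrange : LinearMap.range g = LinearMap.range D.mulVecLin := by
    apply le_antisymm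
    · rintro _ ⟨⟨w, v, rfl⟩, rfl⟩
      refine ⟨v ∘ Sum.inr, ?_⟩
      funext i
      simp [g, π, N, LinearMap.funLeft, mulVecLin_apply, fromBlocks_mulVec]
    · rintro _ ⟨y, rfl⟩
      refine ⟨⟨N.mulVecLin (Sum.elim 0 y), ⟨_, rfl⟩⟩, ?_⟩
      funext i
      simp [g, π, N, LinearMap.funLeft, mulVecLin_apply, fromBlocks_mulVec]
  set K : Submodule F ((m1 ⊕ m2) → F) :=
    (LinearMap.range A.mulVecLin).map (extL (m2 := m2)) with hK
  have hKW : K ≤ W := by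
    rintro _ ⟨_, ⟨x, rfl⟩, rfl⟩
    refine ⟨Sum.elim x 0, ?_⟩
    funext i
    cases i <;> simp [N, extL, mulVecLin_apply, fromBlocks_mulVec]
  have hKker : K.comap W.subtype ≤ LinearMap.ker g := by
    rintro ⟨w, hw⟩ hmem
    obtain ⟨_, ⟨x, rfl⟩, hx⟩ := hmem
    simp only [LinearMap.mem_ker]
    funext i
    have := congrFun hx.symm (Sum.inr i)
    simpa [g, π, LinearMap.funLeft, extL] using this
  have hfinK : finrank F K = A.rank := by
    rw [Matrix.rank]
    exact ((LinearMap.range A.mulVecLin).equivMapOfInjective _ extL_injective).finrank_eq.symm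
  have hKcomap : finrank F (K.comap W.subtype) = finrank F K :=
    (Submodule.comapSubtypeEquivOfLe hKW).finrank_eq
  have h1 : finrank F K ≤ finrank F (LinearMap.ker g) := by
    rw [← hKcomap]; exact Submodule.finrank_mono hKker
  have h2 : finrank F (LinearMap.range g) + finrank F (LinearMap.ker g) = finrank F W :=
    LinearMap.finrank_range_add_finrank_ker g
  have e1 : finrank F (LinearMap.range g) = D.rank := by rw [hrange]; rfl
  have e2 : N.rank = finrank F W := rfl
  omega

lemma rank_fromBlocks_topright_ge (B : Matrix m1 n2 F) :
    B.rank ≤ (fromBlocks (0 : Matrix m1 n1 F) B 0 (0 : Matrix m2 n2 F)).rank := by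
  classical
  set N := fromBlocks (0 : Matrix m1 n1 F) B 0 (0 : Matrix m2 n2 F) with hN
  set W := LinearMap.range N.mulVecLin with hW
  let π : ((m1 ⊕ m2) → F) →ₗ[F] (m1 → F) := LinearMap.funLeft F F Sum.inl
  have hmap : W.map π = LinearMap.range B.mulVecLin := by
    apply le_antisymm
    · rintro _ ⟨_, ⟨v, rfl⟩, rfl⟩
      refine ⟨v ∘ Sum.inr, ?_⟩
      funext i
      simp [π, N, LinearMap.funLeft, mulVecLin_apply, fromBlocks_mulVec]
    · rintro _ ⟨y, rfl⟩
      refine ⟨N.mulVecLin (Sum.elim 0 y), ⟨_, rfl⟩, ?_⟩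
      funext i
      simp [π, N, LinearMap.funLeft, mulVecLin_apply, fromBlocks_mulVec]
  calc B.rank = finrank F (W.map π) := by rw [hmap, Matrix.rank]
    _ ≤ finrank F W := Submodule.finrank_map_le π W
    _ = N.rank := rfl

lemma fromBlocks_sub' {α : Type*} [SubtractionMonoid α] {l m n o : Type*}
    (A A' : Matrix n l α) (B B' : Matrix n m α) (C C' : Matrix o l α) (D D' : Matrix o m α) :
    fromBlocks A B C D - fromBlocks A' B' C' D' =
      fromBlocks (A - A') (B - B') (C - C') (D - D') := by
  ext i j
  rcases i with i | i <;> rcases j with j | j <;> simp [fromBlocks]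

end Aux

/-- Lemma 3.2, middle case: the union over `r` of block matrices
`( M1^r, M3 ; 0, M2^r )`, where the families `M1^r`, `M2^r` have pairwise rank
distances at least `b1, b2` with `b1 + b2 ≥ d_f` and `M3` ranges over a rank metric
code of minimum distance `d_f`, has cardinality `s·|M3|` and minimum rank distance
at least `d_f`. -/
theorem fdrm_middle_case
    (F : Type*) [Field F] [Fintype F] (u1 u2 p m b1 b2 df s : ℕ)
    (hu1 : 0 < u1) (hu2 : 0 < u2) (hp : 0 < p) (hm : 0 < m)
    (hb1 : 0 < b1) (hb2 : 0 < b2) (hdf : 0 < df) (hs : 0 < s)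
    (hb : df ≤ b1 + b2)
    (M1f : Fin s → Matrix (Fin u1) (Fin p) F)
    (M2f : Fin s → Matrix (Fin u2) (Fin m) F)
    (hM1f : ∀ r r', r ≠ r' → M1f r ≠ M1f r' ∧ b1 ≤ (M1f r - M1f r').rank)
    (hM2f : ∀ r r', r ≠ r' → M2f r ≠ M2f r' ∧ b2 ≤ (M2f r - M2f r').rank)
    (𝓜3 : Set (Matrix (Fin u1) (Fin m) F))
    (h𝓜3 : ∀ A ∈ 𝓜3, ∀ B ∈ 𝓜3, A ≠ B → df ≤ (A - B).rank) :
    let 𝓜 : Set (Matrix (Fin u1 ⊕ Fin u2) (Fin p ⊕ Fin m) F) :=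
      {X | ∃ r : Fin s, ∃ M3 ∈ 𝓜3, X = Matrix.fromBlocks (M1f r) M3 0 (M2f r)}
    𝓜.ncard = s * 𝓜3.ncard ∧
    (∀ X ∈ 𝓜, ∀ Y ∈ 𝓜, X ≠ Y → df ≤ (X - Y).rank) := by
  intro 𝓜
  set f : Fin s × Matrix (Fin u1) (Fin m) F → Matrix (Fin u1 ⊕ Fin u2) (Fin p ⊕ Fin m) F :=
    fun q => Matrix.fromBlocks (M1f q.1) q.2 0 (M2f q.1) with hf
  have hinj : Function.Injective f := by
    rintro ⟨r, X⟩ ⟨r', Y⟩ h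
    have h11 : M1f r = M1f r' := by
      have := congrArg Matrix.toBlocks₁₁ h
      simpa [f] using this
    have hrr : r = r' := by
      by_contra hne
      exact (hM1f r r' hne).1 h11
    have h12 : X = Y := by
      have := congrArg Matrix.toBlocks₁₂ h
      simpa [f] using this
    simp [hrr, h12]
  constructor
  · have h𝓜eq : 𝓜 = f '' ((Set.univ : Set (Fin s)) ×ˢ 𝓜3) := by
      ext X
      constructor
      · rintro ⟨r, M3, hM3, rfl⟩
        exact ⟨(r, M3), ⟨Set.mem_univ _, hM3⟩, rfl⟩
      · rintro ⟨⟨r, M3⟩, ⟨-, hM3⟩, rfl⟩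
        exact ⟨r, M3, hM3, rfl⟩
    rw [h𝓜eq, Set.ncard_image_of_injective _ hinj, ← Nat.card_coe_set_eq]
    rw [Nat.card_congr (Equiv.Set.prod _ _), Nat.card_prod]
    rw [Nat.card_congr (Equiv.Set.univ _), Nat.card_eq_fintype_card, Fintype.card_fin,
      Nat.card_coe_set_eq]
  · rintro X ⟨r, A, hA, rfl⟩ Y ⟨r', B, hB, rfl⟩ hXY
    rw [fromBlocks_sub']
    simp only [sub_zero]
    by_cases hrr : r = r'
    · subst hrr
      have hAB : A ≠ B := by
        rintro rfl
        exact hXY rfl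
      have := h𝓜3 A hA B hB hAB
      have hle := rank_fromBlocks_topright_ge (m1 := Fin u1) (m2 := Fin u2) (n1 := Fin p)
        (A - B) (F := F)
      simp only [sub_self] at *
      omega
    · have h1 := (hM1f r r' hrr).2
      have h2 := (hM2f r r' hrr).2
      have hle := rank_fromBlocks_ge (M1f r - M1f r') (A - B) (M2f r - M2f r')
      omega
end
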